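/- arXiv:1904.11403 — 6 statements merged into one kernel-verified Lean document; each statement's English description precedes it below -/
import Mathlib

section
/- Let f ∈ L²((0,1)ⁿ) and h ∈ L²((0,1)ᵐ) be non-constant, and define g(x,ξ) = f(x)·h(ξ). Then the total Sobol sensitivity index of the input x_i for g satisfies S^g_{T,x_i} = λ·S^f_{T,x_i}, where λ = (∫f² dx − f₀²) / (∫f² dx − f₀²h₀²/∫h² dξ), with f₀ = ∫f dx and h₀ = ∫h dξ. -/
open MeasureTheory

noncomputable section SobolDefs

/-- Uniform probability measure on the open unit cube `(0,1)^n`. -/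
def uCube (n : ℕ) : Measure (Fin n → ℝ) :=
  Measure.pi fun _ => volume.restrict (Set.Ioo 0 1)

/-- Mean value of `f`. -/
def mval {α : Type*} [MeasurableSpace α] (μ : Measure α) (f : α → ℝ) : ℝ := ∫ x, f x ∂μ

/-- Integral of the square of `f`. -/
def intSq {α : Type*} [MeasurableSpace α] (μ : Measure α) (f : α → ℝ) : ℝ := ∫ x, (f x) ^ 2 ∂μ

/-- Variance of `f`. -/
def var' {α : Type*} [MeasurableSpace α] (μ : Measure α) (f : α → ℝ) : ℝ := intSq μ f - (mval μ f) ^ 2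

/-- Covariance of `f` and `h`. -/
def cov' {α : Type*} [MeasurableSpace α] (μ : Measure α) (f h : α → ℝ) : ℝ :=
  (∫ x, f x * h x ∂μ) - mval μ f * mval μ h

/-- Conditional mean of `f` obtained by integrating out the coordinate encoded
by the update map `upd` over `(0,1)`. -/
def cMean {α : Type*} [MeasurableSpace α] (upd : α → ℝ → α) (f : α → ℝ) (x : α) : ℝ :=
  ∫ t in Set.Ioo (0 : ℝ) 1, f (upd x t)

/-- Total-effect variance of the coordinate encoded by `upd`. -/
def tVar {α : Type*} [MeasurableSpace α] (μ : Measure α) (upd : α → ℝ → α) (f : α → ℝ) : ℝ :=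
  intSq μ f - ∫ x, (cMean upd f x) ^ 2 ∂μ

/-- Total Sobol sensitivity index of the coordinate encoded by `upd`. -/
def sobolT {α : Type*} [MeasurableSpace α] (μ : Measure α) (upd : α → ℝ → α) (f : α → ℝ) : ℝ :=
  tVar μ upd f / var' μ f

/-- Updating the `i`-th coordinate of a point of the cube. -/
def updC {n : ℕ} (i : Fin n) : (Fin n → ℝ) → ℝ → (Fin n → ℝ) :=
  fun x t => Function.update x i t

/-- Updating the `i`-th coordinate of the first component of a product point. -/
def updF {n : ℕ} {β : Type*} (i : Fin n) : ((Fin n → ℝ) × β) → ℝ → ((Fin n → ℝ) × β) :=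
  fun p t => (Function.update p.1 i t, p.2)

end SobolDefs

instance uCube.sigmaFinite (k : ℕ) : SigmaFinite (uCube k) := by
  unfold uCube; infer_instance

/-- Case 1 (Theorem 3.1, equality): for `g(x,ξ) = f(x)·h(ξ)`,
`S^g_{T,x_i} = λ_{f,h} · S^f_{T,x_i}`. -/
theorem stmt0 {n m : ℕ} (i : Fin n) (f : (Fin n → ℝ) → ℝ) (h : (Fin m → ℝ) → ℝ)
    (hf : MemLp f 2 (uCube n)) (hh : MemLp h 2 (uCube m))
    (hvf : 0 < var' (uCube n) f) (hvh : 0 < var' (uCube m) h)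
    (hvg : 0 < var' ((uCube n).prod (uCube m)) fun p => f p.1 * h p.2) :
    sobolT ((uCube n).prod (uCube m)) (updF i) (fun p => f p.1 * h p.2) =
      ((intSq (uCube n) f - (mval (uCube n) f) ^ 2) /
          (intSq (uCube n) f -
            (mval (uCube n) f) ^ 2 * (mval (uCube m) h) ^ 2 / intSq (uCube m) h)) *
        sobolT (uCube n) (updC i) f := by
  set A := intSq (uCube n) f with hA
  set a := mval (uCube n) f with ha
  set B := intSq (uCube m) h with hBdef
  set b := mval (uCube m) h with hb
  set C := ∫ x, (cMean (updC i) f x) ^ 2 ∂(uCube n) with hC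
  have hBb : b ^ 2 < B := by
    have := hvh; unfold var' at this; dsimp [A, a, B, b] at *; linarith
  have hBpos : 0 < B := lt_of_le_of_lt (sq_nonneg b) hBb
  -- product factorizations
  have h1 : intSq ((uCube n).prod (uCube m)) (fun p => f p.1 * h p.2) = A * B := by
    rw [hA, hBdef]
    unfold intSq
    simp_rw [mul_pow]
    exact integral_prod_mul (fun x => f x ^ 2) (fun y => h y ^ 2)
  have h2 : mval ((uCube n).prod (uCube m)) (fun p => f p.1 * h p.2) = a * b := by
    rw [ha, hb]; unfold mval; exact integral_prod_mul f h
  have h3 : ∀ p : (Fin n → ℝ) × (Fin m → ℝ),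
      cMean (updF i) (fun p => f p.1 * h p.2) p = cMean (updC i) f p.1 * h p.2 := by
    intro p
    unfold cMean updF updC
    simp only
    rw [← integral_mul_const]
  have h4 : (∫ p, (cMean (updF i) (fun p => f p.1 * h p.2) p) ^ 2
      ∂((uCube n).prod (uCube m))) = C * B := by
    rw [hC, hBdef]
    unfold intSq
    calc (∫ p, (cMean (updF i) (fun p => f p.1 * h p.2) p) ^ 2 ∂((uCube n).prod (uCube m)))
        = ∫ p : (Fin n → ℝ) × (Fin m → ℝ),
            (cMean (updC i) f p.1) ^ 2 * (h p.2) ^ 2 ∂((uCube n).prod (uCube m)) := by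
          congr 1; funext p; rw [h3 p]; ring
      _ = _ := integral_prod_mul (fun x => (cMean (updC i) f x) ^ 2) (fun y => h y ^ 2)
  have hvg' : 0 < A * B - (a * b) ^ 2 := by
    have := hvg; unfold var' at this; rw [h1, h2] at this; exact this
  have hvf' : 0 < A - a ^ 2 := by have := hvf; unfold var' at this; exact this
  unfold sobolT tVar var'
  rw [h1, h2, h4]
  rw [← hC]
  have hne1 : A * B - (a * b) ^ 2 ≠ 0 := ne_of_gt hvg'
  have hne2 : A - a ^ 2 ≠ 0 := ne_of_gt hvf'
  have hne3 : B ≠ 0 := ne_of_gt hBpos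
  have hD : A - a ^ 2 * b ^ 2 / B = (A * B - (a * b) ^ 2) / B := by
    field_simp
  rw [hD, div_div_eq_mul_div, div_mul_div_comm,
    div_eq_div_iff hne1 (mul_ne_zero hne1 hne2)]
  ring
end

section
/- Let f ∈ L²((0,1)ⁿ) and h ∈ L²((0,1)ᵐ) be non-constant, and define g(x,ξ) = f(x)·h(ξ). Then the total Sobol sensitivity index of x_i for g is bounded above by that for f: S^g_{T,x_i} ≤ S^f_{T,x_i}. -/
open MeasureTheory

noncomputable section AuxLemmas

noncomputable def rho : Measure ℝ := volume.restrict (Set.Ioo 0 1)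

instance : IsProbabilityMeasure rho := ⟨by simp [rho, Real.volume_Ioo]⟩

instance (n : ℕ) : IsProbabilityMeasure (uCube n) := by
  unfold uCube
  haveI : ∀ _ : Fin n, IsProbabilityMeasure (volume.restrict (Set.Ioo (0:ℝ) 1)) :=
    fun _ => ⟨by simp [Real.volume_Ioo]⟩
  infer_instance

lemma measurable_T {n : ℕ} (i : Fin n) :
    Measurable (fun p : (Fin n → ℝ) × ℝ => Function.update p.1 i p.2) := by
  apply measurable_pi_lambda
  intro j
  simp only [Function.update_apply]
  by_cases hj : j = i <;> simp only [hj, if_true, if_false]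
  · exact measurable_snd
  · exact (measurable_pi_apply j).comp measurable_fst

lemma mp_update {n : ℕ} (i : Fin n) :
    MeasurePreserving (fun p : (Fin n → ℝ) × ℝ => Function.update p.1 i p.2)
      ((uCube n).prod rho) (uCube n) := by
  refine ⟨measurable_T i, ?_⟩
  rw [uCube]
  refine (Measure.pi_eq fun s hs => ?_).symm
  rw [Measure.map_apply (measurable_T i) (MeasurableSet.univ_pi hs)]
  have hpre : (fun p : (Fin n → ℝ) × ℝ => Function.update p.1 i p.2) ⁻¹' (Set.pi Set.univ s)
      = (Set.pi Set.univ (Function.update s i Set.univ)) ×ˢ (s i) := by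
    ext p
    simp only [Set.mem_preimage, Set.mem_pi, Set.mem_univ, true_implies, Set.mem_prod]
    constructor
    · intro hp
      refine ⟨fun j => ?_, by simpa using hp i⟩
      rcases eq_or_ne j i with rfl | hj
      · simp
      · simpa [Function.update_of_ne hj] using hp j
    · rintro ⟨h1, h2⟩ j
      rcases eq_or_ne j i with rfl | hj
      · simpa using h2
      · simpa [Function.update_of_ne hj] using h1 j
  rw [hpre, Measure.prod_prod, Measure.pi_pi]
  have h1 : (fun j => (volume.restrict (Set.Ioo (0:ℝ) 1)) (Function.update s i Set.univ j))
      = Function.update (fun j => (volume.restrict (Set.Ioo (0:ℝ) 1)) (s j)) i 1 := by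
    funext j
    rcases eq_or_ne j i with rfl | hj
    · simp [Real.volume_Ioo]
    · simp [Function.update_of_ne hj]
  rw [h1, Finset.prod_update_of_mem (Finset.mem_univ i), one_mul,
    ← Finset.erase_eq, mul_comm]
  simp only [rho]
  exact Finset.mul_prod_erase Finset.univ (fun j => (volume.restrict (Set.Ioo (0:ℝ) 1)) (s j)) (Finset.mem_univ i)

lemma sq_integral_le {α : Type*} [MeasurableSpace α] {μ : Measure α} [IsProbabilityMeasure μ]
    {g : α → ℝ} (hg : MemLp g 2 μ) : (∫ x, g x ∂μ) ^ 2 ≤ ∫ x, g x ^ 2 ∂μ := by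
  set c := ∫ x, g x ∂μ with hc
  have hgi : Integrable g μ := hg.integrable one_le_two
  have hsq : Integrable (fun x => g x ^ 2) μ := hg.integrable_sq
  have hnn : 0 ≤ ∫ x, (g x - c) ^ 2 ∂μ := integral_nonneg fun x => sq_nonneg _
  have hexp : ∫ x, (g x - c) ^ 2 ∂μ = (∫ x, g x ^ 2 ∂μ) - c ^ 2 := by
    have he : ∀ x, (g x - c) ^ 2 = g x ^ 2 - 2 * c * g x + c ^ 2 := fun x => by ring
    simp_rw [he]
    have e1 : Integrable (fun x => g x ^ 2 - 2 * c * g x) μ := by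
      exact hsq.sub (hgi.const_mul (2 * c))
    have e2 : Integrable (fun x => 2 * c * g x) μ := by
      simpa using hgi.const_mul (2 * c)
    rw [integral_add e1 (integrable_const _),
      integral_sub hsq e2, integral_const_mul, integral_const]
    simp [← hc]
    ring
  linarith

lemma cMean_sq_le {n : ℕ} (i : Fin n) {f : (Fin n → ℝ) → ℝ} (hf : MemLp f 2 (uCube n)) :
    ∫ x, (∫ t, f (Function.update x i t) ∂rho) ^ 2 ∂(uCube n) ≤ ∫ x, f x ^ 2 ∂(uCube n) := by
  have hTm := mp_update i
  set T := fun p : (Fin n → ℝ) × ℝ => Function.update p.1 i p.2 with hT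
  have hfT : MemLp (fun p => f (T p)) 2 ((uCube n).prod rho) := by
    have := hf.comp_measurePreserving hTm
    exact this
  have hsqT : Integrable (fun p => f (T p) ^ 2) ((uCube n).prod rho) := hfT.integrable_sq
  have h1 : ∫ x, f x ^ 2 ∂(uCube n) = ∫ p, f (T p) ^ 2 ∂((uCube n).prod rho) := by
    conv_lhs => rw [← hTm.map_eq]
    rw [integral_map (measurable_T i).aemeasurable
      (hTm.map_eq.symm ▸ hf.integrable_sq.aestronglyMeasurable)]
  have h2 : ∫ p, f (T p) ^ 2 ∂((uCube n).prod rho) = ∫ x, ∫ t, f (T (x, t)) ^ 2 ∂rho ∂(uCube n) :=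
    integral_prod _ hsqT
  have hae1 : ∀ᵐ x ∂(uCube n), Integrable (fun t => f (T (x, t)) ^ 2) rho := hsqT.prod_right_ae
  have hae2 : ∀ᵐ x ∂(uCube n), AEStronglyMeasurable (fun t => f (T (x, t))) rho :=
    hfT.aestronglyMeasurable.prodMk_left
  have haeJ : ∀ᵐ x ∂(uCube n), (∫ t, f (T (x, t)) ∂rho) ^ 2 ≤ ∫ t, f (T (x, t)) ^ 2 ∂rho := by
    filter_upwards [hae1, hae2] with x h1x h2x
    exact sq_integral_le ((memLp_two_iff_integrable_sq h2x).mpr h1x)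
  have hbd : Integrable (fun x => ∫ t, f (T (x, t)) ^ 2 ∂rho) (uCube n) := hsqT.integral_prod_left
  have hcmM : AEStronglyMeasurable (fun x => ∫ t, f (T (x, t)) ∂rho) (uCube n) :=
    hfT.aestronglyMeasurable.integral_prod_right'
  have hci : Integrable (fun x => (∫ t, f (T (x, t)) ∂rho) ^ 2) (uCube n) := by
    refine hbd.mono' (hcmM.pow 2) ?_
    filter_upwards [haeJ] with x hx
    rw [Real.norm_eq_abs, abs_of_nonneg (sq_nonneg _)]
    exact hx
  calc ∫ x, (∫ t, f (Function.update x i t) ∂rho) ^ 2 ∂(uCube n)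
      ≤ ∫ x, ∫ t, f (T (x, t)) ^ 2 ∂rho ∂(uCube n) := integral_mono_ae hci hbd haeJ
    _ = ∫ x, f x ^ 2 ∂(uCube n) := by rw [← h2, ← h1]

end AuxLemmas

/-- Case 1 (upper bound): for `g(x,ξ) = f(x)·h(ξ)`, `S^g_{T,x_i} ≤ S^f_{T,x_i}`. -/
theorem stmt1 {n m : ℕ} (i : Fin n) (f : (Fin n → ℝ) → ℝ) (h : (Fin m → ℝ) → ℝ)
    (hf : MemLp f 2 (uCube n)) (hh : MemLp h 2 (uCube m))
    (hvf : 0 < var' (uCube n) f) (hvh : 0 < var' (uCube m) h)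
    (hvg : 0 < var' ((uCube n).prod (uCube m)) fun p => f p.1 * h p.2) :
    sobolT ((uCube n).prod (uCube m)) (updF i) (fun p => f p.1 * h p.2) ≤
      sobolT (uCube n) (updC i) f := by
  classical
  have hfi : Integrable f (uCube n) := hf.integrable one_le_two
  have hhi : Integrable h (uCube m) := hh.integrable one_le_two
  have hmg : mval ((uCube n).prod (uCube m)) (fun p => f p.1 * h p.2)
      = mval (uCube n) f * mval (uCube m) h := integral_prod_mul f h
  have hsg : intSq ((uCube n).prod (uCube m)) (fun p => f p.1 * h p.2)
      = intSq (uCube n) f * intSq (uCube m) h := by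
    unfold intSq
    simp_rw [mul_pow]
    exact integral_prod_mul (fun x => f x ^ 2) (fun y => h y ^ 2)
  have hcm : ∀ p : (Fin n → ℝ) × (Fin m → ℝ),
      cMean (updF i) (fun p => f p.1 * h p.2) p = cMean (updC i) f p.1 * h p.2 := by
    intro p
    unfold cMean updF updC
    exact integral_mul_const (h p.2) (fun t => f (Function.update p.1 i t))
  have hCg : (∫ p, (cMean (updF i) (fun p => f p.1 * h p.2) p) ^ 2 ∂((uCube n).prod (uCube m)))
      = (∫ x, (cMean (updC i) f x) ^ 2 ∂(uCube n)) * intSq (uCube m) h := by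
    simp_rw [hcm, mul_pow]
    exact integral_prod_mul (fun x => cMean (updC i) f x ^ 2) (fun y => h y ^ 2)
  have hkey : (∫ x, (cMean (updC i) f x) ^ 2 ∂(uCube n)) ≤ intSq (uCube n) f := by
    have := cMean_sq_le i hf
    exact this
  set A := intSq (uCube n) f with hA
  set a := mval (uCube n) f with ha
  set B := intSq (uCube m) h with hB
  set b := mval (uCube m) h with hb
  set C := ∫ x, (cMean (updC i) f x) ^ 2 ∂(uCube n) with hC
  have hvf' : 0 < A - a ^ 2 := hvf
  have hvh' : 0 < B - b ^ 2 := hvh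
  have hvg' : 0 < A * B - (a * b) ^ 2 := by
    have h0 := hvg
    unfold var' at h0
    rw [hsg, hmg] at h0
    exact h0
  have hgoal : (A * B - C * B) / (A * B - (a * b) ^ 2) ≤ (A - C) / (A - a ^ 2) := by
    rw [div_le_div_iff₀ hvg' hvf']
    nlinarith [mul_nonneg (mul_nonneg (sub_nonneg.2 hkey) (sq_nonneg a)) hvh'.le]
  unfold sobolT tVar var'
  rw [hsg, hmg, hCg]
  exact hgoal
end

section
/- Let f ∈ L²((0,1)ⁿ) and h ∈ L²((0,1)ᵐ) be non-constant, and define g(x,ξ) = f(x) + h(ξ). Then S^g_{T,x_i} = μ·S^f_{T,x_i} where μ = 1/(1 + Var(h)/Var(f)) = Var(f)/(Var(f)+Var(h)). In particular S^g_{T,x_i} ≤ S^f_{T,x_i}. -/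
open MeasureTheory

noncomputable section Aux

open Set in
/-- The uniform measure on `(0,1)`. -/
abbrev ν01 : Measure ℝ := volume.restrict (Set.Ioo 0 1)

instance : IsProbabilityMeasure ν01 := ⟨by simp [Real.volume_Ioo]⟩

instance instCubeProb (n : ℕ) : IsProbabilityMeasure (uCube n) := by
  unfold uCube; infer_instance

theorem mp_upd {n : ℕ} (i : Fin n) :
    MeasurePreserving (fun p : (Fin n → ℝ) × ℝ => Function.update p.1 i p.2)
      ((uCube n).prod ν01) (uCube n) := by
  refine ⟨measurable_update', ?_⟩
  rw [uCube]
  refine (Measure.pi_eq fun s hs => ?_).symm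
  rw [Measure.map_apply measurable_update' (MeasurableSet.univ_pi hs)]
  have hpre : (fun p : (Fin n → ℝ) × ℝ => Function.update p.1 i p.2) ⁻¹' (Set.pi Set.univ s)
      = (Set.pi Set.univ fun j => if j = i then Set.univ else s j) ×ˢ s i := by
    ext p
    simp only [Set.mem_preimage, Set.mem_pi, Set.mem_univ, true_implies, Set.mem_prod,
      Function.update_apply]
    constructor
    · intro H
      refine ⟨fun j => ?_, by simpa using H i⟩
      by_cases hj : j = i
      · simp [hj]
      · simpa [hj] using H j
    · rintro ⟨H1, H2⟩ j
      by_cases hj : j = i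
      · simpa [hj] using H2
      · simpa [hj] using H1 j
  rw [hpre, Measure.prod_prod, Measure.pi_pi]
  simp only [apply_ite ν01, measure_univ]
  rw [← Finset.mul_prod_erase Finset.univ (fun j => if j = i then 1 else ν01 (s j))
      (Finset.mem_univ i),
    ← Finset.mul_prod_erase Finset.univ (fun j => ν01 (s j)) (Finset.mem_univ i)]
  simp only [if_pos rfl, one_mul]
  have he : ∀ j ∈ Finset.univ.erase i, (if j = i then (1:ENNReal) else ν01 (s j)) = ν01 (s j) :=
    fun j hj => if_neg (Finset.ne_of_mem_erase hj)
  rw [Finset.prod_congr rfl he, mul_comm]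
  simp

theorem cube_facts {n : ℕ} (i : Fin n) (F : (Fin n → ℝ) → ℝ) (hF : MemLp F 2 (uCube n)) :
    MemLp (cMean (updC i) F) 2 (uCube n) ∧
      (∫ x, cMean (updC i) F x ∂(uCube n)) = mval (uCube n) F ∧
      (∫ x, (cMean (updC i) F x) ^ 2 ∂(uCube n)) ≤ intSq (uCube n) F := by
  have hU := mp_upd i
  set q : ((Fin n → ℝ) × ℝ) → ℝ := fun p => F (Function.update p.1 i p.2) with hqdef
  have hq : MemLp q 2 ((uCube n).prod ν01) := hF.comp_measurePreserving hU
  have hq1 : Integrable q ((uCube n).prod ν01) := hq.integrable one_le_two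
  have hq2 : Integrable (fun p => q p ^ 2) ((uCube n).prod ν01) := hq.integrable_sq
  have hcm : cMean (updC i) F = fun x => ∫ t, q (x, t) ∂ν01 := rfl
  have hcm_int : Integrable (cMean (updC i) F) (uCube n) := by
    rw [hcm]; exact hq1.integral_prod_left
  have hΦ : Integrable (fun x => ∫ t, q (x, t) ^ 2 ∂ν01) (uCube n) := hq2.integral_prod_left
  have hbound : ∀ᵐ x ∂(uCube n), (cMean (updC i) F x) ^ 2 ≤ ∫ t, q (x, t) ^ 2 ∂ν01 := by
    filter_upwards [hq1.prod_right_ae, hq2.prod_right_ae] with x h1 h2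
    have hu2 : MemLp (fun t => q (x, t)) 2 ν01 :=
      (memLp_two_iff_integrable_sq h1.aestronglyMeasurable).2 h2
    have h0 := ProbabilityTheory.variance_nonneg (fun t => q (x, t)) ν01
    rw [ProbabilityTheory.variance_eq_sub hu2] at h0
    simp only [Pi.pow_apply] at h0
    show (∫ t, q (x, t) ∂ν01) ^ 2 ≤ ∫ t, q (x, t) ^ 2 ∂ν01
    linarith
  have haesm : AEStronglyMeasurable (fun x => (cMean (updC i) F x) ^ 2) (uCube n) := by
    exact hcm_int.aestronglyMeasurable.pow 2
  have hcm2_int : Integrable (fun x => (cMean (updC i) F x) ^ 2) (uCube n) := by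
    refine hΦ.mono' haesm ?_
    filter_upwards [hbound] with x hx
    rw [Real.norm_eq_abs, abs_of_nonneg (sq_nonneg _)]
    exact hx
  have hmapF : ∀ G : (Fin n → ℝ) → ℝ, AEStronglyMeasurable G (uCube n) →
      ∫ x, G x ∂(uCube n) = ∫ p, G (Function.update p.1 i p.2) ∂((uCube n).prod ν01) := by
    intro G hG
    have h1 := integral_map (φ := fun p : (Fin n → ℝ) × ℝ => Function.update p.1 i p.2)
      (μ := (uCube n).prod ν01) hU.measurable.aemeasurable (f := G) (by rwa [hU.map_eq])
    rwa [hU.map_eq] at h1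
  have hmean : (∫ x, cMean (updC i) F x ∂(uCube n)) = mval (uCube n) F := by
    rw [hcm, ← integral_prod q hq1, mval, hmapF F hF.aestronglyMeasurable]
  have hle : (∫ x, (cMean (updC i) F x) ^ 2 ∂(uCube n)) ≤ intSq (uCube n) F := by
    have h1 := integral_mono_ae hcm2_int hΦ hbound
    have h2 : (∫ x, ∫ t, q (x, t) ^ 2 ∂ν01 ∂(uCube n)) = intSq (uCube n) F := by
      rw [← integral_prod _ hq2, intSq,
        hmapF (fun x => F x ^ 2) hF.integrable_sq.aestronglyMeasurable]
    rw [← h2]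
    exact h1
  exact ⟨(memLp_two_iff_integrable_sq hcm_int.aestronglyMeasurable).2 hcm2_int, hmean, hle⟩

end Aux

/-- Case 2 (Theorem 3.2): for `g(x,ξ) = f(x) + h(ξ)`,
`S^g_{T,x_i} = μ_{f,h} · S^f_{T,x_i}` with `μ = Var f / (Var f + Var h)`;
in particular `S^g_{T,x_i} ≤ S^f_{T,x_i}`. -/
theorem stmt3 {n m : ℕ} (i : Fin n) (f : (Fin n → ℝ) → ℝ) (h : (Fin m → ℝ) → ℝ)
    (hf : MemLp f 2 (uCube n)) (hh : MemLp h 2 (uCube m))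
    (hvf : 0 < var' (uCube n) f) (hvh : 0 < var' (uCube m) h) :
    sobolT ((uCube n).prod (uCube m)) (updF i) (fun p => f p.1 + h p.2) =
        (var' (uCube n) f / (var' (uCube n) f + var' (uCube m) h)) *
          sobolT (uCube n) (updC i) f ∧
      sobolT ((uCube n).prod (uCube m)) (updF i) (fun p => f p.1 + h p.2) ≤
        sobolT (uCube n) (updC i) f := by
  obtain ⟨hAmem, hAmean, hAle⟩ := cube_facts i f hf
  set A := cMean (updC i) f with hA
  have hf1 : Integrable f (uCube n) := hf.integrable one_le_two
  have hh1 : Integrable h (uCube m) := hh.integrable one_le_two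
  have hf2 : Integrable (fun x => f x ^ 2) (uCube n) := hf.integrable_sq
  have hh2 : Integrable (fun ξ => h ξ ^ 2) (uCube m) := hh.integrable_sq
  have hA1 : Integrable A (uCube n) := hAmem.integrable one_le_two
  have hA2 : Integrable (fun x => A x ^ 2) (uCube n) := hAmem.integrable_sq
  set P := (uCube n).prod (uCube m) with hP
  have hIf1 : Integrable (fun p : (Fin n → ℝ) × (Fin m → ℝ) => f p.1) P := by
    simpa using hf1.mul_prod (integrable_const (1 : ℝ))
  have hIh1 : Integrable (fun p : (Fin n → ℝ) × (Fin m → ℝ) => h p.2) P := by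
    simpa using (integrable_const (1 : ℝ)).mul_prod hh1
  have hIf2 : Integrable (fun p : (Fin n → ℝ) × (Fin m → ℝ) => f p.1 ^ 2) P := by
    simpa using hf2.mul_prod (integrable_const (1 : ℝ))
  have hIh2 : Integrable (fun p : (Fin n → ℝ) × (Fin m → ℝ) => h p.2 ^ 2) P := by
    simpa using (integrable_const (1 : ℝ)).mul_prod hh2
  have hIfh : Integrable (fun p : (Fin n → ℝ) × (Fin m → ℝ) => f p.1 * h p.2) P :=
    hf1.mul_prod hh1
  have hIA2 : Integrable (fun p : (Fin n → ℝ) × (Fin m → ℝ) => A p.1 ^ 2) P := by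
    simpa using hA2.mul_prod (integrable_const (1 : ℝ))
  have hIAh : Integrable (fun p : (Fin n → ℝ) × (Fin m → ℝ) => A p.1 * h p.2) P :=
    hA1.mul_prod hh1
  have hgm : mval P (fun p => f p.1 + h p.2) = mval (uCube n) f + mval (uCube m) h := by
    rw [mval, integral_add hIf1 hIh1, integral_fun_fst, integral_fun_snd]
    simp [mval, measure_univ]
  have hgsq : intSq P (fun p => f p.1 + h p.2)
      = intSq (uCube n) f + 2 * (mval (uCube n) f * mval (uCube m) h) + intSq (uCube m) h := by
    have hpt : (fun p : (Fin n → ℝ) × (Fin m → ℝ) => (f p.1 + h p.2) ^ 2)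
        = fun p => f p.1 ^ 2 + (2 * (f p.1 * h p.2) + h p.2 ^ 2) := by
      funext p; ring
    have hsum : Integrable (fun p : (Fin n → ℝ) × (Fin m → ℝ) =>
        2 * (f p.1 * h p.2) + h p.2 ^ 2) P := (hIfh.const_mul 2).add hIh2
    rw [intSq, hpt, integral_add hIf2 hsum,
      integral_add (hIfh.const_mul 2) hIh2, integral_const_mul, integral_prod_mul]
    rw [hP, integral_fun_fst (fun x => f x ^ 2), integral_fun_snd (fun ξ => h ξ ^ 2)]
    simp only [measure_univ, probReal_univ, ENNReal.toReal_one, one_smul]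
    rw [intSq, intSq, mval, mval]
    ring
  have hslice : ∀ᵐ x ∂(uCube n), Integrable (fun t => f (Function.update x i t)) ν01 :=
    ((hf.comp_measurePreserving (mp_upd i)).integrable one_le_two).prod_right_ae
  have hae : ∀ᵐ p ∂P, cMean (updF i) (fun p => f p.1 + h p.2) p = A p.1 + h p.2 := by
    filter_upwards [Measure.quasiMeasurePreserving_fst.ae hslice] with p hp
    show (∫ t, (f (Function.update p.1 i t) + h p.2) ∂ν01) = A p.1 + h p.2
    rw [integral_add hp (integrable_const _), integral_const]
    simp only [measure_univ, probReal_univ, ENNReal.toReal_one, one_smul]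
    rfl
  have hcg2 : (∫ p, (cMean (updF i) (fun p => f p.1 + h p.2) p) ^ 2 ∂P)
      = (∫ x, A x ^ 2 ∂(uCube n)) + 2 * (mval (uCube n) f * mval (uCube m) h)
        + intSq (uCube m) h := by
    rw [integral_congr_ae (hae.mono fun p hp => by rw [hp])]
    have hpt : (fun p : (Fin n → ℝ) × (Fin m → ℝ) => (A p.1 + h p.2) ^ 2)
        = fun p => A p.1 ^ 2 + (2 * (A p.1 * h p.2) + h p.2 ^ 2) := by
      funext p; ring
    have hsum : Integrable (fun p : (Fin n → ℝ) × (Fin m → ℝ) =>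
        2 * (A p.1 * h p.2) + h p.2 ^ 2) P := (hIAh.const_mul 2).add hIh2
    rw [hpt, integral_add hIA2 hsum,
      integral_add (hIAh.const_mul 2) hIh2, integral_const_mul, integral_prod_mul]
    rw [hP, integral_fun_fst (fun x => A x ^ 2), integral_fun_snd (fun ξ => h ξ ^ 2)]
    simp only [measure_univ, probReal_univ, ENNReal.toReal_one, one_smul]
    rw [hAmean]
    simp only [mval, intSq]
    ring
  have htvar : tVar P (updF i) (fun p => f p.1 + h p.2) = tVar (uCube n) (updC i) f := by
    rw [tVar, tVar, hgsq, hcg2]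
    ring
  have hvarg : var' P (fun p => f p.1 + h p.2) = var' (uCube n) f + var' (uCube m) h := by
    rw [var', var', var', hgsq, hgm]
    ring
  have htf0 : 0 ≤ tVar (uCube n) (updC i) f := by
    rw [tVar]; linarith [hAle]
  constructor
  · rw [sobolT, sobolT, htvar, hvarg]
    have h1 : var' (uCube n) f ≠ 0 := ne_of_gt hvf
    have h2 : var' (uCube n) f + var' (uCube m) h ≠ 0 := ne_of_gt (by linarith)
    field_simp
  · rw [sobolT, sobolT, htvar, hvarg]
    exact div_le_div_of_nonneg_left htf0 hvf (by linarith)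
end

section
/- Let f ∈ L²((0,1)ⁿ), h₁ ∈ L²((0,1)ᵐ), h₂ ∈ L²((0,1)^{k+n−1}) where h₂ does not depend on x_i, and define g(x,ξ,η) = f(x)h₁(ξ) + h₂(x_{∼i},η). Then S^g_{T,x_i} = γ·S^f_{T,x_i}, where γ = (∫f² − f₀²)/(∫f² − f₀²(h₁)₀²/∫h₁² + (∫h₂² − (h₂)₀²)/∫h₁² + 2(h₁)₀((fh₂)₀ − f₀(h₂)₀)/∫h₁²). Moreover, if (h₁)₀·(fh₂)₀ ≥ f₀·(h₁)₀·(h₂)₀, then S^g_{T,x_i} ≤ S^f_{T,x_i}. -/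
open MeasureTheory

section AuxSobol

instance : IsProbabilityMeasure (volume.restrict (Set.Ioo (0:ℝ) 1)) :=
  ⟨by rw [Measure.restrict_apply_univ, Real.volume_Ioo]; norm_num⟩

instance inst_s5 (n : ℕ) : IsProbabilityMeasure (uCube n) := by
  unfold uCube; infer_instance

variable {α β : Type*} [MeasurableSpace α] [MeasurableSpace β]

lemma mpFst (μ : Measure α) (ν : Measure β) [SFinite μ] [IsProbabilityMeasure ν] :
    MeasurePreserving Prod.fst (μ.prod ν) μ :=
  ⟨measurable_fst, by simp⟩

lemma mpSnd (μ : Measure α) (ν : Measure β) [IsProbabilityMeasure μ] [SFinite ν] :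
    MeasurePreserving Prod.snd (μ.prod ν) ν :=
  ⟨measurable_snd, by simp⟩

lemma sq_integral_le_s5 {μ : Measure α} [IsProbabilityMeasure μ] {φ : α → ℝ}
    (h1 : Integrable φ μ) (h2 : Integrable (fun x => φ x ^ 2) μ) :
    (∫ x, φ x ∂μ) ^ 2 ≤ ∫ x, φ x ^ 2 ∂μ := by
  set c := ∫ x, φ x ∂μ with hc
  have h0 : (0:ℝ) ≤ ∫ x, (φ x - c) ^ 2 ∂μ := integral_nonneg fun x => sq_nonneg _
  have hrw : (fun x => (φ x - c) ^ 2) = fun x => (φ x ^ 2 - 2 * c * φ x) + c ^ 2 := by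
    funext x; ring
  have hcm : Integrable (fun x => 2 * c * φ x) μ := h1.const_mul _
  have hint : Integrable (fun x => φ x ^ 2 - 2 * c * φ x) μ := h2.sub hcm
  rw [hrw, integral_add hint (integrable_const _),
    integral_sub h2 hcm, integral_const_mul, integral_const] at h0
  simp only [measure_univ, ENNReal.toReal_one, one_smul, probReal_univ] at h0
  nlinarith [h0]

lemma memL2_mul_integrable {μ : Measure α} {φ ψ : α → ℝ} (hφ : MemLp φ 2 μ)
    (hψ : MemLp ψ 2 μ) : Integrable (fun x => φ x * ψ x) μ := by
  refine Integrable.mono' (hφ.integrable_sq.add hψ.integrable_sq)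
    (hφ.aestronglyMeasurable.mul hψ.aestronglyMeasurable)
    (Filter.Eventually.of_forall fun x => ?_)
  simp only [Pi.add_apply, Real.norm_eq_abs, abs_mul]
  nlinarith [sq_nonneg (|φ x| - |ψ x|), abs_nonneg (φ x), abs_nonneg (ψ x),
    sq_abs (φ x), sq_abs (ψ x)]

end AuxSobol

set_option maxHeartbeats 2000000 in
/-- Case 3 (Theorem A1): for `g(x,ξ,η) = f(x)h₁(ξ) + h₂(x_{∼i},η)` (with `h₂`
independent of `x_i`), `S^g_{T,x_i} = γ_{f,h₁,h₂} · S^f_{T,x_i}`; and if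
`(h₁)₀(fh₂)₀ ≥ f₀(h₁)₀(h₂)₀` then `S^g_{T,x_i} ≤ S^f_{T,x_i}`. -/
theorem stmt5 {n m k : ℕ} (i : Fin n) (f : (Fin n → ℝ) → ℝ)
    (h₁ : (Fin m → ℝ) → ℝ) (h₂ : (Fin n → ℝ) → (Fin k → ℝ) → ℝ)
    (hf : MemLp f 2 (uCube n)) (hh₁ : MemLp h₁ 2 (uCube m))
    (hh₂ : MemLp (fun p : (Fin n → ℝ) × (Fin k → ℝ) => h₂ p.1 p.2) 2
      ((uCube n).prod (uCube k)))
    (hind : ∀ (x : Fin n → ℝ) (t : ℝ) (η : Fin k → ℝ),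
      h₂ (Function.update x i t) η = h₂ x η)
    (hvf : 0 < var' (uCube n) f) (hih₁ : 0 < intSq (uCube m) h₁)
    (hvg : 0 < var' ((uCube n).prod ((uCube m).prod (uCube k)))
      fun p => f p.1 * h₁ p.2.1 + h₂ p.1 p.2.2) :
    sobolT ((uCube n).prod ((uCube m).prod (uCube k))) (updF i)
        (fun p => f p.1 * h₁ p.2.1 + h₂ p.1 p.2.2) =
      ((intSq (uCube n) f - (mval (uCube n) f) ^ 2) /
          (intSq (uCube n) f -
            (mval (uCube n) f) ^ 2 * (mval (uCube m) h₁) ^ 2 / intSq (uCube m) h₁ +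
            (intSq ((uCube n).prod (uCube k)) (fun p => h₂ p.1 p.2) -
              (mval ((uCube n).prod (uCube k)) fun p => h₂ p.1 p.2) ^ 2) /
              intSq (uCube m) h₁ +
            2 * mval (uCube m) h₁ *
              ((mval ((uCube n).prod (uCube k)) fun p => f p.1 * h₂ p.1 p.2) -
                mval (uCube n) f * mval ((uCube n).prod (uCube k)) fun p => h₂ p.1 p.2) /
              intSq (uCube m) h₁)) *
        sobolT (uCube n) (updC i) f ∧
      (mval (uCube m) h₁ * (mval ((uCube n).prod (uCube k)) fun p => f p.1 * h₂ p.1 p.2) ≥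
          mval (uCube n) f * mval (uCube m) h₁ *
            mval ((uCube n).prod (uCube k)) (fun p => h₂ p.1 p.2) →
        sobolT ((uCube n).prod ((uCube m).prod (uCube k))) (updF i)
            (fun p => f p.1 * h₁ p.2.1 + h₂ p.1 p.2.2) ≤
          sobolT (uCube n) (updC i) f) := by
  obtain ⟨n, rfl⟩ : ∃ n', n = n' + 1 := ⟨n - 1, (Nat.succ_pred_eq_of_pos i.pos).symm⟩
  -- notation
  set ν : Measure ℝ := volume.restrict (Set.Ioo 0 1) with hν
  set μB : Measure (Fin n → ℝ) := uCube n with hμB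
  set μC : Measure (Fin m → ℝ) := uCube m with hμC
  set μD : Measure (Fin k → ℝ) := uCube k with hμD
  -- the splitting equivalence
  set e : (Fin (n+1) → ℝ) ≃ᵐ ℝ × (Fin n → ℝ) :=
    MeasurableEquiv.piFinSuccAbove (fun _ => ℝ) i with he
  have mp_e : MeasurePreserving e (uCube (n+1)) (ν.prod μB) :=
    measurePreserving_piFinSuccAbove (fun _ => volume.restrict (Set.Ioo 0 1)) i
  have hsymm : ∀ z : ℝ × (Fin n → ℝ), e.symm z = i.insertNth z.1 z.2 := fun z => rfl
  have hupd : ∀ (z : ℝ × (Fin n → ℝ)) (t : ℝ),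
      Function.update (e.symm z) i t = e.symm (t, z.2) := by
    intro z t
    rw [hsymm, hsymm]
    exact Fin.update_insertNth (α := fun _ => ℝ) i z.1 t z.2
  -- transported functions
  set F : ℝ × (Fin n → ℝ) → ℝ := fun z => f (e.symm z) with hFdef
  set Fc : (Fin n → ℝ) → ℝ := fun y => ∫ t, F (t, y) ∂ν with hFcdef
  set H : (ℝ × (Fin n → ℝ)) × (Fin k → ℝ) → ℝ := fun r => h₂ (e.symm r.1) r.2 with hHdef
  have hF : MemLp F 2 (ν.prod μB) := hf.comp_measurePreserving (mp_e.symm _)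
  -- the product equivalences
  set E₂ : ((Fin (n+1) → ℝ) × (Fin k → ℝ)) ≃ᵐ (ℝ × (Fin n → ℝ)) × (Fin k → ℝ) :=
    e.prodCongr (MeasurableEquiv.refl _) with hE₂
  have mp_E₂ : MeasurePreserving E₂ ((uCube (n+1)).prod μD) ((ν.prod μB).prod μD) :=
    mp_e.prod (MeasurePreserving.id _)
  have hH : MemLp H 2 ((ν.prod μB).prod μD) :=
    hh₂.comp_measurePreserving (mp_E₂.symm _)
  have hHind : ∀ (t s : ℝ) (y : Fin n → ℝ) (d : Fin k → ℝ), H ((t, y), d) = H ((s, y), d) := by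
    intro t s y d
    show h₂ (e.symm (t, y)) d = h₂ (e.symm (s, y)) d
    rw [← hupd (s, y) t]
    exact hind _ t d
  set E : ((Fin (n+1) → ℝ) × ((Fin m → ℝ) × (Fin k → ℝ))) ≃ᵐ
      (ℝ × (Fin n → ℝ)) × ((Fin m → ℝ) × (Fin k → ℝ)) :=
    e.prodCongr (MeasurableEquiv.refl _) with hE
  have mp_E : MeasurePreserving E ((uCube (n+1)).prod (μC.prod μD))
      ((ν.prod μB).prod (μC.prod μD)) :=
    mp_e.prod (MeasurePreserving.id _)
  -- reordering equivalences
  set ρ : ((ℝ × (Fin n → ℝ)) × ((Fin m → ℝ) × (Fin k → ℝ))) ≃ᵐ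
      (((ℝ × (Fin n → ℝ)) × (Fin k → ℝ)) × (Fin m → ℝ)) :=
    ((MeasurableEquiv.refl _).prodCongr MeasurableEquiv.prodComm).trans
      MeasurableEquiv.prodAssoc.symm with hρ
  have hρ_app : ∀ q : (ℝ × (Fin n → ℝ)) × ((Fin m → ℝ) × (Fin k → ℝ)),
      ρ q = ((q.1, q.2.2), q.2.1) := fun q => rfl
  have mp_ρ : MeasurePreserving ρ ((ν.prod μB).prod (μC.prod μD))
      (((ν.prod μB).prod μD).prod μC) :=
    ((measurePreserving_prodAssoc (ν.prod μB) μD μC).symm _).comp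
      ((MeasurePreserving.id _).prod Measure.measurePreserving_swap)
  set τ : ((ℝ × (Fin n → ℝ)) × (Fin k → ℝ)) ≃ᵐ
      (((Fin n → ℝ) × (Fin k → ℝ)) × ℝ) :=
    MeasurableEquiv.prodAssoc.trans MeasurableEquiv.prodComm with hτ
  have hτ_app : ∀ r : (ℝ × (Fin n → ℝ)) × (Fin k → ℝ),
      τ r = ((r.1.2, r.2), r.1.1) := fun r => rfl
  have mp_τ : MeasurePreserving τ ((ν.prod μB).prod μD) ((μB.prod μD).prod ν) :=
    Measure.measurePreserving_swap.comp (measurePreserving_prodAssoc ν μB μD)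
  -- scalar quantities
  set p0 : ℝ := mval (uCube (n+1)) f with hp0def
  set pI : ℝ := intSq (uCube (n+1)) f with hpIdef
  set a0 : ℝ := mval μC h₁ with ha0def
  set IA : ℝ := intSq μC h₁ with hIAdef
  set b0 : ℝ := mval ((uCube (n+1)).prod μD) (fun p => h₂ p.1 p.2) with hb0def
  set IB2 : ℝ := intSq ((uCube (n+1)).prod μD) (fun p => h₂ p.1 p.2) with hIB2def
  set M : ℝ := mval ((uCube (n+1)).prod μD) (fun p => f p.1 * h₂ p.1 p.2) with hMdef
  set JB : ℝ := ∫ y, (Fc y) ^ 2 ∂μB with hJBdef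
  -- transported integrals
  have hp0 : ∫ z, F z ∂(ν.prod μB) = p0 := (mp_e.symm _).integral_comp' f
  have hpI : ∫ z, F z ^ 2 ∂(ν.prod μB) = pI := (mp_e.symm _).integral_comp' fun x => f x ^ 2
  have hb0 : ∫ r, H r ∂((ν.prod μB).prod μD) = b0 :=
    (mp_E₂.symm _).integral_comp' fun p : (Fin (n+1) → ℝ) × (Fin k → ℝ) => h₂ p.1 p.2
  have hIB2 : ∫ r, H r ^ 2 ∂((ν.prod μB).prod μD) = IB2 :=
    (mp_E₂.symm _).integral_comp' fun p : (Fin (n+1) → ℝ) × (Fin k → ℝ) => (h₂ p.1 p.2) ^ 2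
  have hM : ∫ r, F r.1 * H r ∂((ν.prod μB).prod μD) = M :=
    (mp_E₂.symm _).integral_comp' fun p : (Fin (n+1) → ℝ) × (Fin k → ℝ) => f p.1 * h₂ p.1 p.2
  -- slice analysis of F
  set Fsw : (Fin n → ℝ) × ℝ → ℝ := fun w => F (w.2, w.1) with hFswdef
  have mp_sw : MeasurePreserving (Prod.swap : (Fin n → ℝ) × ℝ → ℝ × (Fin n → ℝ))
      (μB.prod ν) (ν.prod μB) := Measure.measurePreserving_swap
  have hFsw : MemLp Fsw 2 (μB.prod ν) := hF.comp_measurePreserving mp_sw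
  have intFsw : Integrable Fsw (μB.prod ν) := hFsw.integrable one_le_two
  have intFsw2 : Integrable (fun w => Fsw w ^ 2) (μB.prod ν) := hFsw.integrable_sq
  have hslice : ∀ᵐ y ∂μB, Integrable (fun t => F (t, y)) ν ∧
      Integrable (fun t => F (t, y) ^ 2) ν :=
    (intFsw.prod_right_ae).and (intFsw2.prod_right_ae)
  have hFcm : AEStronglyMeasurable Fc μB := hFsw.aestronglyMeasurable.integral_prod_right'
  have hdom : Integrable (fun y => ∫ t, F (t, y) ^ 2 ∂ν) μB := intFsw2.integral_prod_left
  have hJ : ∀ᵐ y ∂μB, (Fc y) ^ 2 ≤ ∫ t, F (t, y) ^ 2 ∂ν := by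
    filter_upwards [hslice] with y hy
    exact sq_integral_le_s5 hy.1 hy.2
  have hIF_iter : ∫ y, (∫ t, F (t, y) ^ 2 ∂ν) ∂μB = pI := by
    rw [← integral_prod _ intFsw2]
    rw [show (∫ w, Fsw w ^ 2 ∂(μB.prod ν)) =
        ∫ w, (fun z => F z ^ 2) (Prod.swap w) ∂(μB.prod ν) from rfl]
    exact (mp_sw.integral_comp MeasurableEquiv.prodComm.measurableEmbedding
      fun z => F z ^ 2).trans hpI
  have hFc2int : Integrable (fun y => Fc y ^ 2) μB := by
    refine Integrable.mono' hdom (hFcm.pow 2) ?_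
    filter_upwards [hJ] with y hy
    rwa [Real.norm_eq_abs, abs_of_nonneg (sq_nonneg _)]
  have hJBle : JB ≤ pI := by
    rw [hJBdef, ← hIF_iter]
    exact integral_mono_ae hFc2int hdom hJ
  have hFc : MemLp Fc 2 μB := (memLp_two_iff_integrable_sq hFcm).2 hFc2int
  -- key Fubini identity: integrating out the i-th coordinate in M
  set Hb : (Fin n → ℝ) × (Fin k → ℝ) → ℝ := fun w1 => H ((0, w1.1), w1.2) with hHbdef
  have hHb : ∀ r : (ℝ × (Fin n → ℝ)) × (Fin k → ℝ), H r = Hb (r.1.2, r.2) :=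
    fun r => hHind r.1.1 0 r.1.2 r.2
  have hFR : MemLp (fun r : (ℝ × (Fin n → ℝ)) × (Fin k → ℝ) => F r.1) 2
      ((ν.prod μB).prod μD) := hF.comp_measurePreserving (mpFst (ν.prod μB) μD)
  have intFH : Integrable (fun r => F r.1 * H r) ((ν.prod μB).prod μD) :=
    memL2_mul_integrable hFR hH
  have hψint : Integrable (fun w : ((Fin n → ℝ) × (Fin k → ℝ)) × ℝ => F (w.2, w.1.1) * Hb w.1)
      ((μB.prod μD).prod ν) := by
    have hcomp : ((fun w : ((Fin n → ℝ) × (Fin k → ℝ)) × ℝ => F (w.2, w.1.1) * Hb w.1) ∘ ⇑τ) =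
        fun r => F r.1 * H r := by
      funext r
      simp only [Function.comp_apply, hτ_app]
      rw [hHb r]
    refine (mp_τ.integrable_comp_emb τ.measurableEmbedding).1 ?_
    rw [hcomp]; exact intFH
  have hM_tau : M = ∫ w, F (w.2, w.1.1) * Hb w.1 ∂((μB.prod μD).prod ν) := by
    rw [← hM]
    calc ∫ r, F r.1 * H r ∂((ν.prod μB).prod μD)
        = ∫ r, (fun w : ((Fin n → ℝ) × (Fin k → ℝ)) × ℝ => F (w.2, w.1.1) * Hb w.1) (τ r)
            ∂((ν.prod μB).prod μD) := by
          refine integral_congr_ae (Filter.Eventually.of_forall fun r => ?_)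
          simp only [hτ_app]
          rw [hHb r]
      _ = ∫ w, F (w.2, w.1.1) * Hb w.1 ∂((μB.prod μD).prod ν) :=
          mp_τ.integral_comp τ.measurableEmbedding fun w => F (w.2, w.1.1) * Hb w.1
  have hMM' : ∫ w, F (w.2, w.1.1) * Hb w.1 ∂((μB.prod μD).prod ν) =
      ∫ w1, Fc w1.1 * Hb w1 ∂(μB.prod μD) := by
    rw [integral_prod _ hψint]
    refine integral_congr_ae (Filter.Eventually.of_forall fun w1 => ?_)
    show (∫ t, F (t, w1.1) * Hb w1 ∂ν) = Fc w1.1 * Hb w1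
    exact integral_mul_const _ _
  have hMM : ∫ r, Fc r.1.2 * H r ∂((ν.prod μB).prod μD) = M := by
    calc ∫ r, Fc r.1.2 * H r ∂((ν.prod μB).prod μD)
        = ∫ r, (fun w : ((Fin n → ℝ) × (Fin k → ℝ)) × ℝ => Fc w.1.1 * Hb w.1) (τ r)
            ∂((ν.prod μB).prod μD) := by
          refine integral_congr_ae (Filter.Eventually.of_forall fun r => ?_)
          simp only [hτ_app]
          rw [hHb r]
      _ = ∫ w, Fc w.1.1 * Hb w.1 ∂((μB.prod μD).prod ν) :=
          mp_τ.integral_comp τ.measurableEmbedding fun w => Fc w.1.1 * Hb w.1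
      _ = ∫ w1, Fc w1.1 * Hb w1 ∂(μB.prod μD) := by
          simpa using integral_fun_fst (μ := μB.prod μD) (ν := ν) fun w1 => Fc w1.1 * Hb w1
      _ = M := by rw [hM_tau, hMM']
  -- L² lifts to the big product space
  have hG1 : MemLp (fun q : (ℝ × (Fin n → ℝ)) × ((Fin m → ℝ) × (Fin k → ℝ)) => F q.1) 2
      ((ν.prod μB).prod (μC.prod μD)) :=
    hF.comp_measurePreserving (mpFst (ν.prod μB) (μC.prod μD))
  have hH2l : MemLp (fun q : (ℝ × (Fin n → ℝ)) × ((Fin m → ℝ) × (Fin k → ℝ)) =>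
      H (q.1, q.2.2)) 2 ((ν.prod μB).prod (μC.prod μD)) :=
    hH.comp_measurePreserving ((MeasurePreserving.id (ν.prod μB)).prod (mpSnd μC μD))
  have hFcQpair : MemLp (fun z : ℝ × (Fin n → ℝ) => Fc z.2) 2 (ν.prod μB) :=
    hFc.comp_measurePreserving (mpSnd ν μB)
  have hFcR : MemLp (fun r : (ℝ × (Fin n → ℝ)) × (Fin k → ℝ) => Fc r.1.2) 2
      ((ν.prod μB).prod μD) :=
    hFc.comp_measurePreserving ((mpSnd ν μB).comp (mpFst (ν.prod μB) μD))
  have hh₁C : MemLp (fun w : (Fin m → ℝ) × (Fin k → ℝ) => h₁ w.1) 2 (μC.prod μD) :=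
    hh₁.comp_measurePreserving (mpFst μC μD)
  -- integrability of the pieces on the big space
  have intT1 : Integrable (fun q : (ℝ × (Fin n → ℝ)) × ((Fin m → ℝ) × (Fin k → ℝ)) =>
      (F q.1) ^ 2 * (h₁ q.2.1) ^ 2) ((ν.prod μB).prod (μC.prod μD)) :=
    Integrable.mul_prod hF.integrable_sq hh₁C.integrable_sq
  have intT1' : Integrable (fun q : (ℝ × (Fin n → ℝ)) × ((Fin m → ℝ) × (Fin k → ℝ)) =>
      (Fc q.1.2) ^ 2 * (h₁ q.2.1) ^ 2) ((ν.prod μB).prod (μC.prod μD)) :=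
    Integrable.mul_prod hFcQpair.integrable_sq hh₁C.integrable_sq
  have intCross : Integrable (fun q : (ℝ × (Fin n → ℝ)) × ((Fin m → ℝ) × (Fin k → ℝ)) =>
      F q.1 * H (q.1, q.2.2) * h₁ q.2.1) ((ν.prod μB).prod (μC.prod μD)) := by
    exact (mp_ρ.integrable_comp_emb (g := fun z => F z.1.1 * H z.1 * h₁ z.2)
      ρ.measurableEmbedding).2
      (Integrable.mul_prod (memL2_mul_integrable hFR hH) (hh₁.integrable one_le_two))
  have intCross' : Integrable (fun q : (ℝ × (Fin n → ℝ)) × ((Fin m → ℝ) × (Fin k → ℝ)) =>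
      Fc q.1.2 * H (q.1, q.2.2) * h₁ q.2.1) ((ν.prod μB).prod (μC.prod μD)) := by
    exact (mp_ρ.integrable_comp_emb (g := fun z => Fc z.1.1.2 * H z.1 * h₁ z.2)
      ρ.measurableEmbedding).2
      (Integrable.mul_prod (memL2_mul_integrable hFcR hH) (hh₁.integrable one_le_two))
  have intT3 : Integrable (fun q : (ℝ × (Fin n → ℝ)) × ((Fin m → ℝ) × (Fin k → ℝ)) =>
      H (q.1, q.2.2) ^ 2) ((ν.prod μB).prod (μC.prod μD)) := hH2l.integrable_sq
  have intG1Hc : Integrable (fun q : (ℝ × (Fin n → ℝ)) × ((Fin m → ℝ) × (Fin k → ℝ)) =>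
      F q.1 * h₁ q.2.1) ((ν.prod μB).prod (μC.prod μD)) :=
    Integrable.mul_prod (hF.integrable one_le_two) (hh₁C.integrable one_le_two)
  have intG1Hc' : Integrable (fun q : (ℝ × (Fin n → ℝ)) × ((Fin m → ℝ) × (Fin k → ℝ)) =>
      Fc q.1.2 * h₁ q.2.1) ((ν.prod μB).prod (μC.prod μD)) :=
    Integrable.mul_prod (hFcQpair.integrable one_le_two) (hh₁C.integrable one_le_two)
  have intH2l : Integrable (fun q : (ℝ × (Fin n → ℝ)) × ((Fin m → ℝ) × (Fin k → ℝ)) =>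
      H (q.1, q.2.2)) ((ν.prod μB).prod (μC.prod μD)) := hH2l.integrable one_le_two
  -- values of the pieces
  have hIAfst : ∫ w : (Fin m → ℝ) × (Fin k → ℝ), h₁ w.1 ^ 2 ∂(μC.prod μD) = IA := by
    simpa [hIAdef, intSq] using integral_fun_fst (μ := μC) (ν := μD) fun c => h₁ c ^ 2
  have ha0fst : ∫ w : (Fin m → ℝ) × (Fin k → ℝ), h₁ w.1 ∂(μC.prod μD) = a0 := by
    simpa [ha0def, mval] using integral_fun_fst (μ := μC) (ν := μD) h₁
  have vT1 : ∫ q, (F q.1) ^ 2 * (h₁ q.2.1) ^ 2 ∂((ν.prod μB).prod (μC.prod μD)) = pI * IA := by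
    rw [show (∫ q, (F q.1) ^ 2 * (h₁ q.2.1) ^ 2 ∂((ν.prod μB).prod (μC.prod μD))) =
        (∫ z, F z ^ 2 ∂(ν.prod μB)) * ∫ w : (Fin m → ℝ) × (Fin k → ℝ), h₁ w.1 ^ 2 ∂(μC.prod μD)
      from integral_prod_mul (fun z : ℝ × (Fin n → ℝ) => F z ^ 2) (fun w : (Fin m → ℝ) × (Fin k → ℝ) => h₁ w.1 ^ 2), hpI, hIAfst]
  have vT1' : ∫ q, (Fc q.1.2) ^ 2 * (h₁ q.2.1) ^ 2 ∂((ν.prod μB).prod (μC.prod μD))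
      = JB * IA := by
    rw [show (∫ q, (Fc q.1.2) ^ 2 * (h₁ q.2.1) ^ 2 ∂((ν.prod μB).prod (μC.prod μD))) =
        (∫ z : ℝ × (Fin n → ℝ), Fc z.2 ^ 2 ∂(ν.prod μB)) *
          ∫ w : (Fin m → ℝ) × (Fin k → ℝ), h₁ w.1 ^ 2 ∂(μC.prod μD)
      from integral_prod_mul (fun z : ℝ × (Fin n → ℝ) => Fc z.2 ^ 2) (fun w : (Fin m → ℝ) × (Fin k → ℝ) => h₁ w.1 ^ 2), hIAfst]
    have : ∫ z : ℝ × (Fin n → ℝ), Fc z.2 ^ 2 ∂(ν.prod μB) = JB := by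
      simpa using integral_fun_snd (μ := ν) (ν := μB) fun y => Fc y ^ 2
    rw [this]
  have vCross : ∫ q, F q.1 * H (q.1, q.2.2) * h₁ q.2.1 ∂((ν.prod μB).prod (μC.prod μD))
      = M * a0 := by
    calc ∫ q, F q.1 * H (q.1, q.2.2) * h₁ q.2.1 ∂((ν.prod μB).prod (μC.prod μD))
        = ∫ z, F z.1.1 * H z.1 * h₁ z.2 ∂(((ν.prod μB).prod μD).prod μC) :=
          mp_ρ.integral_comp ρ.measurableEmbedding fun z => F z.1.1 * H z.1 * h₁ z.2
      _ = (∫ r, F r.1 * H r ∂((ν.prod μB).prod μD)) * ∫ c, h₁ c ∂μC :=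
          integral_prod_mul (fun r => F r.1 * H r) h₁
      _ = M * a0 := by rw [hM]; rfl
  have vCross' : ∫ q, Fc q.1.2 * H (q.1, q.2.2) * h₁ q.2.1 ∂((ν.prod μB).prod (μC.prod μD))
      = M * a0 := by
    calc ∫ q, Fc q.1.2 * H (q.1, q.2.2) * h₁ q.2.1 ∂((ν.prod μB).prod (μC.prod μD))
        = ∫ z, Fc z.1.1.2 * H z.1 * h₁ z.2 ∂(((ν.prod μB).prod μD).prod μC) :=
          mp_ρ.integral_comp ρ.measurableEmbedding fun z => Fc z.1.1.2 * H z.1 * h₁ z.2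
      _ = (∫ r, Fc r.1.2 * H r ∂((ν.prod μB).prod μD)) * ∫ c, h₁ c ∂μC :=
          integral_prod_mul (fun r => Fc r.1.2 * H r) h₁
      _ = M * a0 := by rw [hMM]; rfl
  have vT3 : ∫ q, H (q.1, q.2.2) ^ 2 ∂((ν.prod μB).prod (μC.prod μD)) = IB2 := by
    calc ∫ q, H (q.1, q.2.2) ^ 2 ∂((ν.prod μB).prod (μC.prod μD))
        = ∫ z, H z.1 ^ 2 ∂(((ν.prod μB).prod μD).prod μC) :=
          mp_ρ.integral_comp ρ.measurableEmbedding fun z => H z.1 ^ 2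
      _ = IB2 := by
          show (∫ z : ((ℝ × (Fin n → ℝ)) × (Fin k → ℝ)) × (Fin m → ℝ), H z.1 ^ 2
            ∂(((ν.prod μB).prod μD).prod μC)) = IB2
          rw [show (∫ z, H z.1 ^ 2 ∂(((ν.prod μB).prod μD).prod μC)) =
            (μC Set.univ).toReal • ∫ r, H r ^ 2 ∂((ν.prod μB).prod μD)
            from integral_fun_fst fun r => H r ^ 2, hIB2]
          simp
  have vH2l : ∫ q, H (q.1, q.2.2) ∂((ν.prod μB).prod (μC.prod μD)) = b0 := by
    calc ∫ q, H (q.1, q.2.2) ∂((ν.prod μB).prod (μC.prod μD))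
        = ∫ z, H z.1 ∂(((ν.prod μB).prod μD).prod μC) :=
          mp_ρ.integral_comp ρ.measurableEmbedding fun z => H z.1
      _ = b0 := by
          show (∫ z : ((ℝ × (Fin n → ℝ)) × (Fin k → ℝ)) × (Fin m → ℝ), H z.1
            ∂(((ν.prod μB).prod μD).prod μC)) = b0
          rw [show (∫ z, H z.1 ∂(((ν.prod μB).prod μD).prod μC)) =
            (μC Set.univ).toReal • ∫ r, H r ∂((ν.prod μB).prod μD)
            from integral_fun_fst H, hb0]
          simp
  have vG1Hc : ∫ q, F q.1 * h₁ q.2.1 ∂((ν.prod μB).prod (μC.prod μD)) = p0 * a0 := by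
    rw [show (∫ q, F q.1 * h₁ q.2.1 ∂((ν.prod μB).prod (μC.prod μD))) =
        (∫ z, F z ∂(ν.prod μB)) * ∫ w : (Fin m → ℝ) × (Fin k → ℝ), h₁ w.1 ∂(μC.prod μD)
      from integral_prod_mul F (fun w : (Fin m → ℝ) × (Fin k → ℝ) => h₁ w.1), hp0, ha0fst]
  have A1 : ∫ q, (F q.1 * h₁ q.2.1 + H (q.1, q.2.2)) ^ 2 ∂((ν.prod μB).prod (μC.prod μD))
      = pI * IA + M * a0 * 2 + IB2 := by
    calc ∫ q, (F q.1 * h₁ q.2.1 + H (q.1, q.2.2)) ^ 2 ∂((ν.prod μB).prod (μC.prod μD))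
        = ∫ q, ((F q.1) ^ 2 * (h₁ q.2.1) ^ 2 + F q.1 * H (q.1, q.2.2) * h₁ q.2.1 * 2
            + H (q.1, q.2.2) ^ 2) ∂((ν.prod μB).prod (μC.prod μD)) := by
          refine integral_congr_ae (Filter.Eventually.of_forall fun q => ?_)
          ring
      _ = pI * IA + M * a0 * 2 + IB2 := by
          have intT12 : Integrable (fun q : (ℝ × (Fin n → ℝ)) × ((Fin m → ℝ) × (Fin k → ℝ)) =>
              F q.1 ^ 2 * h₁ q.2.1 ^ 2 + F q.1 * H (q.1, q.2.2) * h₁ q.2.1 * 2)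
              ((ν.prod μB).prod (μC.prod μD)) := intT1.add (intCross.mul_const 2)
          rw [integral_add intT12 intT3,
            integral_add intT1 (intCross.mul_const 2), integral_mul_const, vT1, vCross, vT3]
  have A3 : ∫ q, (Fc q.1.2 * h₁ q.2.1 + H (q.1, q.2.2)) ^ 2 ∂((ν.prod μB).prod (μC.prod μD))
      = JB * IA + M * a0 * 2 + IB2 := by
    calc ∫ q, (Fc q.1.2 * h₁ q.2.1 + H (q.1, q.2.2)) ^ 2 ∂((ν.prod μB).prod (μC.prod μD))
        = ∫ q, ((Fc q.1.2) ^ 2 * (h₁ q.2.1) ^ 2 + Fc q.1.2 * H (q.1, q.2.2) * h₁ q.2.1 * 2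
            + H (q.1, q.2.2) ^ 2) ∂((ν.prod μB).prod (μC.prod μD)) := by
          refine integral_congr_ae (Filter.Eventually.of_forall fun q => ?_)
          ring
      _ = JB * IA + M * a0 * 2 + IB2 := by
          have intT12' : Integrable (fun q : (ℝ × (Fin n → ℝ)) × ((Fin m → ℝ) × (Fin k → ℝ)) =>
              Fc q.1.2 ^ 2 * h₁ q.2.1 ^ 2 + Fc q.1.2 * H (q.1, q.2.2) * h₁ q.2.1 * 2)
              ((ν.prod μB).prod (μC.prod μD)) := intT1'.add (intCross'.mul_const 2)
          rw [integral_add intT12' intT3,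
            integral_add intT1' (intCross'.mul_const 2), integral_mul_const, vT1', vCross', vT3]
  have A2 : ∫ q, (F q.1 * h₁ q.2.1 + H (q.1, q.2.2)) ∂((ν.prod μB).prod (μC.prod μD))
      = p0 * a0 + b0 := by
    rw [integral_add intG1Hc intH2l, vG1Hc, vH2l]
  -- conditional mean of f
  have hcf : ∀ z : ℝ × (Fin n → ℝ), cMean (updC i) f (e.symm z) = Fc z.2 := by
    intro z
    simp only [cMean, updC, hupd]
    rfl
  have hstepf : ∫ z, (cMean (updC i) f (e.symm z)) ^ 2 ∂(ν.prod μB)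
      = ∫ x, (cMean (updC i) f x) ^ 2 ∂(uCube (n+1)) :=
    (mp_e.symm _).integral_comp' fun x => (cMean (updC i) f x) ^ 2
  have A4 : ∫ x, (cMean (updC i) f x) ^ 2 ∂(uCube (n+1)) = JB := by
    rw [← hstepf]
    calc ∫ z, (cMean (updC i) f (e.symm z)) ^ 2 ∂(ν.prod μB)
        = ∫ z : ℝ × (Fin n → ℝ), Fc z.2 ^ 2 ∂(ν.prod μB) := by
          refine integral_congr_ae (Filter.Eventually.of_forall fun z => ?_)
          show cMean (updC i) f (e.symm z) ^ 2 = Fc z.2 ^ 2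
          rw [hcf]
      _ = JB := by simpa using integral_fun_snd (μ := ν) (ν := μB) fun y => Fc y ^ 2
  -- conditional mean of g (a.e.)
  have mp_π : MeasurePreserving (fun q : (ℝ × (Fin n → ℝ)) × ((Fin m → ℝ) × (Fin k → ℝ)) =>
      q.1.2) ((ν.prod μB).prod (μC.prod μD)) μB :=
    (mpSnd ν μB).comp (mpFst (ν.prod μB) (μC.prod μD))
  have haeint : ∀ᵐ q ∂((ν.prod μB).prod (μC.prod μD)),
      Integrable (fun t => F (t, q.1.2)) ν := by
    refine ae_of_ae_map (p := fun y => Integrable (fun t => F (t, y)) ν)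
      mp_π.aemeasurable ?_
    rw [mp_π.map_eq]
    exact hslice.mono fun y hy => hy.1
  have hGc : ∀ᵐ q ∂((ν.prod μB).prod (μC.prod μD)),
      cMean (updF i) (fun p : (Fin (n+1) → ℝ) × ((Fin m → ℝ) × (Fin k → ℝ)) =>
        f p.1 * h₁ p.2.1 + h₂ p.1 p.2.2) (E.symm q)
        = Fc q.1.2 * h₁ q.2.1 + H (q.1, q.2.2) := by
    filter_upwards [haeint] with q hq
    have h1 : ∀ t : ℝ, Function.update (E.symm q).1 i t = e.symm (t, q.1.2) := fun t =>
      hupd q.1 t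
    have h2 : ∀ t : ℝ, h₂ (e.symm (t, q.1.2)) q.2.2 = H (q.1, q.2.2) := fun t =>
      hHind t q.1.1 q.1.2 q.2.2
    simp only [cMean, updF, h1]
    show (∫ t in Set.Ioo (0:ℝ) 1,
        (f (e.symm (t, q.1.2)) * h₁ q.2.1 + h₂ (e.symm (t, q.1.2)) q.2.2)) = _
    simp only [h2]
    rw [show (∫ t in Set.Ioo (0:ℝ) 1,
          (f (e.symm (t, q.1.2)) * h₁ q.2.1 + H (q.1, q.2.2))) =
        ∫ t, (F (t, q.1.2) * h₁ q.2.1 + H (q.1, q.2.2)) ∂ν from rfl,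
      integral_add (hq.mul_const _) (integrable_const _), integral_mul_const, integral_const]
    simp [measure_univ]
    exact Or.inl rfl
  have hstepg : ∫ q, (cMean (updF i) (fun p : (Fin (n+1) → ℝ) ×
        ((Fin m → ℝ) × (Fin k → ℝ)) => f p.1 * h₁ p.2.1 + h₂ p.1 p.2.2) (E.symm q)) ^ 2
        ∂((ν.prod μB).prod (μC.prod μD))
      = ∫ p, (cMean (updF i) (fun p : (Fin (n+1) → ℝ) × ((Fin m → ℝ) × (Fin k → ℝ)) =>
        f p.1 * h₁ p.2.1 + h₂ p.1 p.2.2) p) ^ 2 ∂((uCube (n+1)).prod (μC.prod μD)) :=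
    (mp_E.symm _).integral_comp' fun p => (cMean (updF i) (fun p : (Fin (n+1) → ℝ) ×
      ((Fin m → ℝ) × (Fin k → ℝ)) => f p.1 * h₁ p.2.1 + h₂ p.1 p.2.2) p) ^ 2
  have A3' : ∫ p, (cMean (updF i) (fun p : (Fin (n+1) → ℝ) × ((Fin m → ℝ) × (Fin k → ℝ)) =>
      f p.1 * h₁ p.2.1 + h₂ p.1 p.2.2) p) ^ 2 ∂((uCube (n+1)).prod (μC.prod μD))
      = JB * IA + M * a0 * 2 + IB2 := by
    rw [← hstepg]
    refine Eq.trans (integral_congr_ae (hGc.mono fun q hq => ?_)) A3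
    show (cMean (updF i) (fun p : (Fin (n+1) → ℝ) × ((Fin m → ℝ) × (Fin k → ℝ)) =>
      f p.1 * h₁ p.2.1 + h₂ p.1 p.2.2) (E.symm q)) ^ 2
        = (Fc q.1.2 * h₁ q.2.1 + H (q.1, q.2.2)) ^ 2
    rw [hq]
  -- transported moments of g
  have hIg : intSq ((uCube (n+1)).prod (μC.prod μD)) (fun p : (Fin (n+1) → ℝ) ×
      ((Fin m → ℝ) × (Fin k → ℝ)) => f p.1 * h₁ p.2.1 + h₂ p.1 p.2.2)
      = pI * IA + M * a0 * 2 + IB2 := by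
    have hs : ∫ q, (F q.1 * h₁ q.2.1 + H (q.1, q.2.2)) ^ 2 ∂((ν.prod μB).prod (μC.prod μD))
        = intSq ((uCube (n+1)).prod (μC.prod μD)) (fun p : (Fin (n+1) → ℝ) ×
          ((Fin m → ℝ) × (Fin k → ℝ)) => f p.1 * h₁ p.2.1 + h₂ p.1 p.2.2) :=
      (mp_E.symm _).integral_comp' fun p : (Fin (n+1) → ℝ) × ((Fin m → ℝ) × (Fin k → ℝ)) =>
        (f p.1 * h₁ p.2.1 + h₂ p.1 p.2.2) ^ 2
    rw [← hs, A1]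
  have hMg : mval ((uCube (n+1)).prod (μC.prod μD)) (fun p : (Fin (n+1) → ℝ) ×
      ((Fin m → ℝ) × (Fin k → ℝ)) => f p.1 * h₁ p.2.1 + h₂ p.1 p.2.2) = p0 * a0 + b0 := by
    have hs : ∫ q, (F q.1 * h₁ q.2.1 + H (q.1, q.2.2)) ∂((ν.prod μB).prod (μC.prod μD))
        = mval ((uCube (n+1)).prod (μC.prod μD)) (fun p : (Fin (n+1) → ℝ) ×
          ((Fin m → ℝ) × (Fin k → ℝ)) => f p.1 * h₁ p.2.1 + h₂ p.1 p.2.2) :=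
      (mp_E.symm _).integral_comp' fun p : (Fin (n+1) → ℝ) × ((Fin m → ℝ) × (Fin k → ℝ)) =>
        f p.1 * h₁ p.2.1 + h₂ p.1 p.2.2
    rw [← hs, A2]
  -- variance bounds
  have A5 : a0 ^ 2 ≤ IA := sq_integral_le_s5 (hh₁.integrable one_le_two) hh₁.integrable_sq
  have A6 : b0 ^ 2 ≤ IB2 := by
    have h := sq_integral_le_s5 (hH.integrable one_le_two) hH.integrable_sq
    rwa [hb0, hIB2] at h
  -- final algebra
  set Dv : ℝ := pI - p0 ^ 2 * a0 ^ 2 / IA + (IB2 - b0 ^ 2) / IA + 2 * a0 * (M - p0 * b0) / IA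
    with hDv
  have hVg : var' ((uCube (n+1)).prod (μC.prod μD)) (fun p : (Fin (n+1) → ℝ) ×
      ((Fin m → ℝ) × (Fin k → ℝ)) => f p.1 * h₁ p.2.1 + h₂ p.1 p.2.2)
      = pI * IA + M * a0 * 2 + IB2 - (p0 * a0 + b0) ^ 2 := by
    rw [var', hIg, hMg]
  have hTg : tVar ((uCube (n+1)).prod (μC.prod μD)) (updF i) (fun p : (Fin (n+1) → ℝ) ×
      ((Fin m → ℝ) × (Fin k → ℝ)) => f p.1 * h₁ p.2.1 + h₂ p.1 p.2.2)
      = IA * (pI - JB) := by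
    rw [tVar, hIg, A3']; ring
  have hTf : tVar (uCube (n+1)) (updC i) f = pI - JB := by
    rw [tVar, A4]
  have hVf0 : 0 < pI - p0 ^ 2 := hvf
  have hVg0 : 0 < pI * IA + M * a0 * 2 + IB2 - (p0 * a0 + b0) ^ 2 := hVg ▸ hvg
  have hVgD : pI * IA + M * a0 * 2 + IB2 - (p0 * a0 + b0) ^ 2 = IA * Dv := by
    rw [hDv]; field_simp; ring
  have hDv0 : 0 < Dv := by
    have h := hVg0
    rw [hVgD] at h
    exact (mul_pos_iff_of_pos_left hih₁).mp h
  have g1 : sobolT ((uCube (n+1)).prod (μC.prod μD)) (updF i) (fun p : (Fin (n+1) → ℝ) ×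
      ((Fin m → ℝ) × (Fin k → ℝ)) => f p.1 * h₁ p.2.1 + h₂ p.1 p.2.2)
      = (pI - JB) / Dv := by
    rw [sobolT, hTg, hVg, hVgD, mul_div_mul_left _ _ (ne_of_gt hih₁)]
  have g2 : sobolT (uCube (n+1)) (updC i) f = (pI - JB) / (pI - p0 ^ 2) := by
    rw [sobolT, hTf]
    rfl
  constructor
  · rw [g1, g2]
    field_simp
  · intro hcond
    rw [g1, g2]
    have hTf0 : 0 ≤ pI - JB := by linarith [hJBle]
    have hle : pI - p0 ^ 2 ≤ Dv := by
      have key : IA * (Dv - (pI - p0 ^ 2))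
          = p0 ^ 2 * (IA - a0 ^ 2) + (IB2 - b0 ^ 2) + 2 * (a0 * M - p0 * a0 * b0) := by
        rw [hDv]
        field_simp
        ring
      have h2 : 0 ≤ IA * (Dv - (pI - p0 ^ 2)) := by
        rw [key]
        have t1 : (0:ℝ) ≤ p0 ^ 2 * (IA - a0 ^ 2) :=
          mul_nonneg (sq_nonneg _) (by linarith [A5])
        have t3 : (0:ℝ) ≤ a0 * M - p0 * a0 * b0 := by linarith [hcond]
        linarith [A6]
      have h3 := (mul_nonneg_iff_of_pos_left hih₁).mp h2
      linarith
    exact div_le_div_of_nonneg_left hTf0 hVf0 hle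
end

section
/- Let f, h ∈ L²((0,1)ⁿ) with Cov(f,h) = (fh)₀ − f₀h₀ ≥ 0, and define g = f + h. Then S^g_{T,x_i} ≤ (√(S^f_{T,x_i}·Var(f)) + √(S^h_{T,x_i}·Var(h)))² / (Var(f) + Var(h)). -/
open MeasureTheory

noncomputable section SobolAux
namespace SobolAux

/-- The uniform measure on `(0,1)`. -/
def nu : Measure ℝ := volume.restrict (Set.Ioo 0 1)

instance : IsProbabilityMeasure nu := ⟨by simp [nu]⟩

instance uCubeProb (n : ℕ) : IsProbabilityMeasure (uCube n) := by
  have : ∀ _ : Fin n, IsProbabilityMeasure (volume.restrict (Set.Ioo (0:ℝ) 1)) := fun _ => ⟨by simp⟩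
  unfold uCube; infer_instance

instance (n : ℕ) (i : Fin n) : Unique {j : Fin n // j = i} :=
  ⟨⟨⟨i, rfl⟩⟩, fun ⟨_, hj⟩ => Subtype.ext hj⟩

/-- Splitting off the `i`-th coordinate of the cube. -/
def eqv {n : ℕ} (i : Fin n) : (Fin n → ℝ) ≃ᵐ ℝ × ({j : Fin n // ¬ j = i} → ℝ) :=
  (MeasurableEquiv.piEquivPiSubtypeProd (fun _ : Fin n => ℝ) (fun j => j = i)).trans
    ((MeasurableEquiv.piUnique (fun _ : {j : Fin n // j = i} => ℝ)).prodCongr (MeasurableEquiv.refl _))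

/-- Product measure on the remaining coordinates. -/
def pim {n : ℕ} (i : Fin n) : Measure ({j : Fin n // ¬ j = i} → ℝ) :=
  Measure.pi fun _ => nu

instance (n : ℕ) (i : Fin n) : IsProbabilityMeasure (pim i) := by
  unfold pim; infer_instance

lemma eqv_mp {n : ℕ} (i : Fin n) :
    MeasurePreserving (eqv i) (uCube n) (nu.prod (pim i)) := by
  have h1 := measurePreserving_piEquivPiSubtypeProd (fun _ : Fin n => nu) (fun j => j = i)
  have h2 : MeasurePreserving
      (Prod.map (MeasurableEquiv.piUnique (fun _ : {j : Fin n // j = i} => ℝ))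
        (id : ({j : Fin n // ¬ j = i} → ℝ) → _))
      ((Measure.pi fun _ : {j : Fin n // j = i} => nu).prod (pim i)) (nu.prod (pim i)) :=
    (measurePreserving_piUnique _).prod (MeasurePreserving.id _)
  rw [Subsingleton.elim (Subtype.fintype fun j : Fin n => j = i) (Fintype.subtypeEq i)] at h1
  exact h2.comp h1

lemma eqv_update {n : ℕ} (i : Fin n) (x : Fin n → ℝ) (t : ℝ) :
    eqv i (Function.update x i t) = (t, (eqv i x).2) := by
  simp only [eqv, MeasurableEquiv.trans_apply, MeasurableEquiv.prodCongr,
    MeasurableEquiv.piEquivPiSubtypeProd_apply, MeasurableEquiv.piUnique,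
    MeasurableEquiv.coe_mk, Equiv.prodCongr_apply, Equiv.coe_fn_mk, Prod.map,
    MeasurableEquiv.refl_apply, Equiv.piUnique_apply]
  refine Prod.ext ?_ ?_
  · show Function.update x i t ↑(default : {j : Fin n // j = i}) = t
    have : ((default : {j : Fin n // j = i}) : Fin n) = i := rfl
    rw [this, Function.update_self]
  · show (MeasurableEquiv.refl _).toEquiv _ = _
    simp only [MeasurableEquiv.refl, Equiv.refl_apply]
    funext j
    exact Function.update_of_ne j.2 _ _

lemma update_eq_symm {n : ℕ} (i : Fin n) (x : Fin n → ℝ) (t : ℝ) :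
    Function.update x i t = (eqv i).symm (t, (eqv i x).2) := by
  rw [← eqv_update i x t, MeasurableEquiv.symm_apply_apply]

/-- Cauchy–Schwarz for integrals. -/
lemma cs_int {α : Type*} [MeasurableSpace α] {μ : Measure α} {a b : α → ℝ}
    (ha : MemLp a 2 μ) (hb : MemLp b 2 μ) :
    ∫ x, a x * b x ∂μ ≤ Real.sqrt (∫ x, a x ^ 2 ∂μ) * Real.sqrt (∫ x, b x ^ 2 ∂μ) := by
  set A := ha.toLp a with hA
  set B := hb.toLp b with hB
  have key : ∀ (u v : α → ℝ) (hu : MemLp u 2 μ) (hv : MemLp v 2 μ),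
      @inner ℝ _ _ (hu.toLp u) (hv.toLp v) = ∫ x, u x * v x ∂μ := by
    intro u v hu hv
    rw [MeasureTheory.L2.inner_def]
    refine integral_congr_ae ?_
    filter_upwards [hu.coeFn_toLp, hv.coeFn_toLp] with x h1 h2
    simp [h1, h2, RCLike.inner_apply, mul_comm]
  have hAB : ∫ x, a x * b x ∂μ = @inner ℝ _ _ A B := (key a b ha hb).symm
  have hnA : Real.sqrt (∫ x, a x ^ 2 ∂μ) = ‖A‖ := by
    have : ∫ x, a x ^ 2 ∂μ = @inner ℝ _ _ A A := by
      rw [key a a ha ha]; simp [pow_two]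
    rw [this, real_inner_self_eq_norm_sq, Real.sqrt_sq (norm_nonneg A)]
  have hnB : Real.sqrt (∫ x, b x ^ 2 ∂μ) = ‖B‖ := by
    have : ∫ x, b x ^ 2 ∂μ = @inner ℝ _ _ B B := by
      rw [key b b hb hb]; simp [pow_two]
    rw [this, real_inner_self_eq_norm_sq, Real.sqrt_sq (norm_nonneg B)]
  rw [hAB, hnA, hnB]
  exact real_inner_le_norm A B

/-- Product of two `L²` functions is integrable. -/
lemma int_mul {α : Type*} [MeasurableSpace α] {μ : Measure α} {a b : α → ℝ}
    (ha : MemLp a 2 μ) (hb : MemLp b 2 μ) :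
    Integrable (fun x => a x * b x) μ := by
  have := MeasureTheory.L2.integrable_inner (𝕜 := ℝ) (ha.toLp a) (hb.toLp b)
  refine this.congr ?_
  filter_upwards [ha.coeFn_toLp, hb.coeFn_toLp] with x h1 h2
  simp [h1, h2, RCLike.inner_apply, mul_comm]

/-- Jensen: the square of the mean is at most the mean of the square. -/
lemma sq_int_le {α : Type*} [MeasurableSpace α] {μ : Measure α} [IsProbabilityMeasure μ]
    {a : α → ℝ} (ha : MemLp a 2 μ) :
    (∫ x, a x ∂μ) ^ 2 ≤ ∫ x, a x ^ 2 ∂μ := by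
  have habs : MemLp (fun x => |a x|) 2 μ := by
    simpa [Real.norm_eq_abs] using ha.norm
  have h1 : ∫ x, |a x| * (1:ℝ) ∂μ ≤
      Real.sqrt (∫ x, |a x| ^ 2 ∂μ) * Real.sqrt (∫ x, (1:ℝ) ^ 2 ∂μ) :=
    cs_int habs (memLp_const 1)
  have h2 : |∫ x, a x ∂μ| ≤ Real.sqrt (∫ x, a x ^ 2 ∂μ) := by
    calc |∫ x, a x ∂μ| ≤ ∫ x, |a x| ∂μ := by
          simpa [Real.norm_eq_abs] using norm_integral_le_integral_norm (μ := μ) a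
    _ ≤ Real.sqrt (∫ x, a x ^ 2 ∂μ) := by
          simpa [sq_abs] using h1
  calc (∫ x, a x ∂μ) ^ 2 = |∫ x, a x ∂μ| ^ 2 := (sq_abs _).symm
  _ ≤ Real.sqrt (∫ x, a x ^ 2 ∂μ) ^ 2 := by
        exact pow_le_pow_left₀ (abs_nonneg _) h2 2
  _ = ∫ x, a x ^ 2 ∂μ := Real.sq_sqrt (integral_nonneg fun x => sq_nonneg _)


section Transfer

variable {n : ℕ} (i : Fin n)

lemma int_comp (φ : ℝ × ({j : Fin n // ¬ j = i} → ℝ) → ℝ) :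
    ∫ x, φ (eqv i x) ∂(uCube n) = ∫ z, φ z ∂(nu.prod (pim i)) :=
  (eqv_mp i).integral_comp' φ

lemma memℒp_comp_eqv {ψ : ℝ × ({j : Fin n // ¬ j = i} → ℝ) → ℝ}
    (hψ : MemLp ψ 2 (nu.prod (pim i))) :
    MemLp (fun x => ψ (eqv i x)) 2 (uCube n) := by
  have hmap : (uCube n).map (eqv i) = nu.prod (pim i) := (eqv_mp i).map_eq
  rw [← hmap] at hψ
  exact (memLp_map_measure_iff hψ.aestronglyMeasurable
    (eqv i).measurable.aemeasurable).1 hψ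

lemma memℒp_comp_eqv_symm {F : (Fin n → ℝ) → ℝ} (hF : MemLp F 2 (uCube n)) :
    MemLp (fun z => F ((eqv i).symm z)) 2 (nu.prod (pim i)) := by
  have hmap : (uCube n).map (eqv i) = nu.prod (pim i) := (eqv_mp i).map_eq
  have hsm : AEStronglyMeasurable (fun z => F ((eqv i).symm z)) ((uCube n).map (eqv i)) := by
    rw [hmap]
    exact hF.aestronglyMeasurable.comp_measurePreserving ((eqv_mp i).symm (eqv i))
  have hcomp : (fun z => F ((eqv i).symm z)) ∘ (eqv i) = F := by
    funext x; simp
  have h2 : MemLp (fun z => F ((eqv i).symm z)) 2 ((uCube n).map (eqv i)) :=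
    (memLp_map_measure_iff hsm (eqv i).measurable.aemeasurable).2 (by rw [hcomp]; exact hF)
  rwa [hmap] at h2

/-- The conditional mean, transported to the split coordinates. -/
def Q (F : (Fin n → ℝ) → ℝ) (y : {j : Fin n // ¬ j = i} → ℝ) : ℝ :=
  ∫ t, F ((eqv i).symm (t, y)) ∂nu

lemma cMean_eq (F : (Fin n → ℝ) → ℝ) (x : Fin n → ℝ) :
    cMean (updC i) F x = Q i F ((eqv i x).2) := by
  unfold cMean updC Q
  show ∫ t, F (Function.update x i t) ∂(volume.restrict (Set.Ioo 0 1)) = _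
  rw [show (volume.restrict (Set.Ioo (0:ℝ) 1)) = nu from rfl]
  congr 1
  funext t
  rw [update_eq_symm]

lemma memℒp_Q {F : (Fin n → ℝ) → ℝ} (hF : MemLp F 2 (uCube n)) :
    MemLp (Q i F) 2 (pim i) := by
  set G : ℝ × ({j : Fin n // ¬ j = i} → ℝ) → ℝ := fun z => F ((eqv i).symm z) with hGdef
  have hG : MemLp G 2 (nu.prod (pim i)) := memℒp_comp_eqv_symm i hF
  have hGsq : Integrable (fun z => G z ^ 2) (nu.prod (pim i)) := hG.integrable_sq
  -- a.e. measurability of Q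
  have hQm : AEStronglyMeasurable (Q i F) (pim i) := by
    have hsw : AEStronglyMeasurable (fun z : ({j : Fin n // ¬ j = i} → ℝ) × ℝ => G z.swap)
        ((pim i).prod nu) := hG.aestronglyMeasurable.prod_swap
    exact hsw.integral_prod_right'
  refine (memLp_two_iff_integrable_sq hQm).2 ?_
  -- bound : Q y ^ 2 ≤ ∫ t, G (t,y)^2 for a.e. y
  have hslice_sq : ∀ᵐ y ∂(pim i), Integrable (fun t => G (t, y) ^ 2) nu :=
    hGsq.prod_left_ae
  have hslice_m : ∀ᵐ y ∂(pim i), AEStronglyMeasurable (fun t => G (t, y)) nu := by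
    have hsw : AEStronglyMeasurable (fun z : ({j : Fin n // ¬ j = i} → ℝ) × ℝ => G z.swap)
        ((pim i).prod nu) := hG.aestronglyMeasurable.prod_swap
    exact hsw.prodMk_left
  have hbound : ∀ᵐ y ∂(pim i), ‖Q i F y ^ 2‖ ≤ ∫ t, G (t, y) ^ 2 ∂nu := by
    filter_upwards [hslice_sq, hslice_m] with y h1 h2
    have hmem : MemLp (fun t => G (t, y)) 2 nu := (memLp_two_iff_integrable_sq h2).2 h1
    have := sq_int_le hmem
    calc ‖Q i F y ^ 2‖ = (∫ t, G (t, y) ∂nu) ^ 2 := by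
          rw [Real.norm_eq_abs, abs_of_nonneg (sq_nonneg _)]; rfl
    _ ≤ ∫ t, G (t, y) ^ 2 ∂nu := this
  have hQsqm : AEStronglyMeasurable (fun y => Q i F y ^ 2) (pim i) := by
    exact hQm.pow 2
  exact Integrable.mono' hGsq.integral_prod_right hQsqm hbound

lemma memℒp_Qsnd {F : (Fin n → ℝ) → ℝ} (hF : MemLp F 2 (uCube n)) :
    MemLp (fun z : ℝ × ({j : Fin n // ¬ j = i} → ℝ) => Q i F z.2) 2 (nu.prod (pim i)) := by
  have hQ := memℒp_Q i hF
  have hmap : (nu.prod (pim i)).map Prod.snd = pim i := by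
    rw [Measure.map_snd_prod]; simp
  have h := (memLp_map_measure_iff (f := (Prod.snd : ℝ × ({j : Fin n // ¬ j = i} → ℝ) → _))
      (by rw [hmap]; exact hQ.aestronglyMeasurable) measurable_snd.aemeasurable).1
      (by rw [hmap]; exact hQ)
  exact h

lemma memℒp_cMean {F : (Fin n → ℝ) → ℝ} (hF : MemLp F 2 (uCube n)) :
    MemLp (cMean (updC i) F) 2 (uCube n) := by
  have h := memℒp_comp_eqv i (memℒp_Qsnd i hF)
  refine h.ae_eq ?_
  exact Filter.Eventually.of_forall fun x => (cMean_eq i F x).symm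

/-- The tower rule: the conditional mean is an orthogonal projection. -/
lemma tower {F : (Fin n → ℝ) → ℝ} (hF : MemLp F 2 (uCube n)) :
    ∫ x, cMean (updC i) F x * F x ∂(uCube n) = ∫ x, (cMean (updC i) F x) ^ 2 ∂(uCube n) := by
  set G : ℝ × ({j : Fin n // ¬ j = i} → ℝ) → ℝ := fun z => F ((eqv i).symm z) with hGdef
  have hG : MemLp G 2 (nu.prod (pim i)) := memℒp_comp_eqv_symm i hF
  have hQp := memℒp_Qsnd i hF
  have hGF : ∀ x, G (eqv i x) = F x := fun x => by simp [hGdef]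
  -- left side
  have hL : ∫ x, cMean (updC i) F x * F x ∂(uCube n)
      = ∫ z, Q i F z.2 * G z ∂(nu.prod (pim i)) := by
    rw [← int_comp i (fun z => Q i F z.2 * G z)]
    congr 1; funext x; rw [cMean_eq i F x, hGF]
  have hR : ∫ x, (cMean (updC i) F x) ^ 2 ∂(uCube n)
      = ∫ z, (Q i F z.2) ^ 2 ∂(nu.prod (pim i)) := by
    rw [← int_comp i (fun z => (Q i F z.2) ^ 2)]
    congr 1; funext x; rw [cMean_eq i F x]
  rw [hL, hR]
  -- both sides equal ∫ y, (Q y)^2 ∂pim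
  have hmulint : Integrable (fun z => Q i F z.2 * G z) (nu.prod (pim i)) := int_mul hQp hG
  have hGint : Integrable G (nu.prod (pim i)) := hG.integrable one_le_two
  have h1 : ∫ z, Q i F z.2 * G z ∂(nu.prod (pim i)) = ∫ y, (Q i F y) ^ 2 ∂(pim i) := by
    rw [integral_prod_symm _ hmulint]
    refine integral_congr_ae ?_
    filter_upwards [hGint.prod_left_ae] with y hy
    rw [integral_const_mul]
    rw [show (∫ t, G (t, y) ∂nu) = Q i F y from rfl, pow_two]
  have h2 : ∫ z, (Q i F z.2) ^ 2 ∂(nu.prod (pim i)) = ∫ y, (Q i F y) ^ 2 ∂(pim i) := by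
    have hsq : Integrable (fun z : ℝ × ({j : Fin n // ¬ j = i} → ℝ) => Q i F z.2 ^ 2)
        (nu.prod (pim i)) := hQp.integrable_sq
    rw [integral_prod_symm _ hsq]
    refine integral_congr_ae ?_
    refine Filter.Eventually.of_forall fun y => ?_
    simp
  rw [h1, h2]

lemma cMean_add {f h : (Fin n → ℝ) → ℝ} (hf : MemLp f 2 (uCube n))
    (hh : MemLp h 2 (uCube n)) :
    cMean (updC i) (f + h) =ᵐ[uCube n]
      fun x => cMean (updC i) f x + cMean (updC i) h x := by
  have hGf : Integrable (fun z => f ((eqv i).symm z)) (nu.prod (pim i)) :=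
    (memℒp_comp_eqv_symm i hf).integrable one_le_two
  have hGh : Integrable (fun z => h ((eqv i).symm z)) (nu.prod (pim i)) :=
    (memℒp_comp_eqv_symm i hh).integrable one_le_two
  have hy : ∀ᵐ y ∂(pim i), Q i (f + h) y = Q i f y + Q i h y := by
    filter_upwards [hGf.prod_left_ae, hGh.prod_left_ae] with y h1 h2
    show ∫ t, (f + h) ((eqv i).symm (t, y)) ∂nu = _
    simp only [Pi.add_apply]
    exact integral_add h1 h2
  have hsnd : MeasurePreserving (Prod.snd : ℝ × ({j : Fin n // ¬ j = i} → ℝ) → _)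
      (nu.prod (pim i)) (pim i) :=
    ⟨measurable_snd, by rw [Measure.map_snd_prod]; simp⟩
  have hm : MeasurePreserving (fun x => (eqv i x).2) (uCube n) (pim i) :=
    hsnd.comp (eqv_mp i)
  filter_upwards [hm.quasiMeasurePreserving.ae hy] with x hx
  rw [cMean_eq i (f + h) x, hx, ← cMean_eq i f x, ← cMean_eq i h x]

lemma tVar_eq {F : (Fin n → ℝ) → ℝ} (hF : MemLp F 2 (uCube n)) :
    tVar (uCube n) (updC i) F = ∫ x, (F x - cMean (updC i) F x) ^ 2 ∂(uCube n) := by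
  set P := cMean (updC i) F with hPdef
  have hP : MemLp P 2 (uCube n) := memℒp_cMean i hF
  have hFsq : Integrable (fun x => F x ^ 2) (uCube n) := hF.integrable_sq
  have hPsq : Integrable (fun x => P x ^ 2) (uCube n) := hP.integrable_sq
  have hPF : Integrable (fun x => P x * F x) (uCube n) := int_mul hP hF
  have hexp : ∫ x, (F x - P x) ^ 2 ∂(uCube n)
      = ∫ x, F x ^ 2 ∂(uCube n) - 2 * ∫ x, P x * F x ∂(uCube n)
        + ∫ x, P x ^ 2 ∂(uCube n) := by
    have : (fun x => (F x - P x) ^ 2)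
        = fun x => F x ^ 2 - 2 * (P x * F x) + P x ^ 2 := by
      funext x; ring
    have hsub : Integrable (fun x => F x ^ 2 - 2 * (P x * F x)) (uCube n) :=
      hFsq.sub (hPF.const_mul 2)
    rw [this, integral_add hsub hPsq, integral_sub hFsq (hPF.const_mul 2), integral_const_mul]
  have htow := tower i hF
  rw [← hPdef] at htow
  show intSq (uCube n) F - ∫ x, P x ^ 2 ∂(uCube n) = _
  rw [hexp]
  unfold intSq
  linarith [htow]

end Transfer

end SobolAux
end SobolAux

/-- Case 4 (Theorem B1): if `Cov(f,h) ≥ 0` and `g = f + h`, then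
`S^g_{T,x_i} ≤ (√(S^f Var f) + √(S^h Var h))² / (Var f + Var h)`. -/
theorem stmt6 {n : ℕ} (i : Fin n) (f h : (Fin n → ℝ) → ℝ)
    (hf : MemLp f 2 (uCube n)) (hh : MemLp h 2 (uCube n))
    (hvf : 0 < var' (uCube n) f) (hvh : 0 < var' (uCube n) h)
    (hvg : 0 < var' (uCube n) (f + h))
    (hcov : 0 ≤ cov' (uCube n) f h) :
    sobolT (uCube n) (updC i) (f + h) ≤
      (Real.sqrt (sobolT (uCube n) (updC i) f * var' (uCube n) f) +
          Real.sqrt (sobolT (uCube n) (updC i) h * var' (uCube n) h)) ^ 2 /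
        (var' (uCube n) f + var' (uCube n) h) := by
  classical
  open SobolAux in
  have hg : MemLp (f + h) 2 (uCube n) := hf.add hh
  have hPf : MemLp (cMean (updC i) f) 2 (uCube n) := SobolAux.memℒp_cMean i hf
  have hPh : MemLp (cMean (updC i) h) 2 (uCube n) := SobolAux.memℒp_cMean i hh
  have ha : MemLp (fun x => f x - cMean (updC i) f x) 2 (uCube n) := hf.sub hPf
  have hb : MemLp (fun x => h x - cMean (updC i) h x) 2 (uCube n) := hh.sub hPh
  have hIa : tVar (uCube n) (updC i) f
      = ∫ x, (f x - cMean (updC i) f x) ^ 2 ∂(uCube n) := SobolAux.tVar_eq i hf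
  have hIb : tVar (uCube n) (updC i) h
      = ∫ x, (h x - cMean (updC i) h x) ^ 2 ∂(uCube n) := SobolAux.tVar_eq i hh
  have haa : (0:ℝ) ≤ ∫ x, (f x - cMean (updC i) f x) ^ 2 ∂(uCube n) :=
    integral_nonneg fun x => sq_nonneg _
  have hbb : (0:ℝ) ≤ ∫ x, (h x - cMean (updC i) h x) ^ 2 ∂(uCube n) :=
    integral_nonneg fun x => sq_nonneg _
  -- tVar of the sum
  have hIg : tVar (uCube n) (updC i) (f + h)
      = ∫ x, ((f x - cMean (updC i) f x) + (h x - cMean (updC i) h x)) ^ 2 ∂(uCube n) := by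
    rw [SobolAux.tVar_eq i hg]
    refine integral_congr_ae ?_
    filter_upwards [SobolAux.cMean_add i hf hh] with x hx
    rw [Pi.add_apply, hx]; ring
  -- Minkowski-type bound
  have hcs := SobolAux.cs_int ha hb
  have hexp : ∫ x, ((f x - cMean (updC i) f x) + (h x - cMean (updC i) h x)) ^ 2 ∂(uCube n)
      = (∫ x, (f x - cMean (updC i) f x) ^ 2 ∂(uCube n))
        + 2 * (∫ x, (f x - cMean (updC i) f x) * (h x - cMean (updC i) h x) ∂(uCube n))
        + (∫ x, (h x - cMean (updC i) h x) ^ 2 ∂(uCube n)) := by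
    have heq : (fun x => ((f x - cMean (updC i) f x) + (h x - cMean (updC i) h x)) ^ 2)
        = fun x => (f x - cMean (updC i) f x) ^ 2
            + 2 * ((f x - cMean (updC i) f x) * (h x - cMean (updC i) h x))
            + (h x - cMean (updC i) h x) ^ 2 := by
      funext x; ring
    have hsum : Integrable (fun x => (f x - cMean (updC i) f x) ^ 2
        + 2 * ((f x - cMean (updC i) f x) * (h x - cMean (updC i) h x))) (uCube n) :=
      ha.integrable_sq.add ((SobolAux.int_mul ha hb).const_mul 2)
    rw [heq, integral_add hsum hb.integrable_sq,
      integral_add ha.integrable_sq ((SobolAux.int_mul ha hb).const_mul 2), integral_const_mul]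
  have hkey : tVar (uCube n) (updC i) (f + h)
      ≤ (Real.sqrt (tVar (uCube n) (updC i) f) + Real.sqrt (tVar (uCube n) (updC i) h)) ^ 2 := by
    rw [hIg, hexp, hIa, hIb, add_sq, Real.sq_sqrt haa, Real.sq_sqrt hbb]
    nlinarith [hcs]
  have hTg0 : 0 ≤ tVar (uCube n) (updC i) (f + h) := by
    rw [hIg]; exact integral_nonneg fun x => sq_nonneg _
  -- variance comparison
  have hvar : var' (uCube n) f + var' (uCube n) h ≤ var' (uCube n) (f + h) := by
    have h1 : intSq (uCube n) (f + h)
        = intSq (uCube n) f + 2 * (∫ x, f x * h x ∂(uCube n)) + intSq (uCube n) h := by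
      unfold intSq
      have heq : (fun x => ((f + h) x) ^ 2)
          = fun x => f x ^ 2 + 2 * (f x * h x) + h x ^ 2 := by
        funext x; simp only [Pi.add_apply]; ring
      have hsum : Integrable (fun x => f x ^ 2 + 2 * (f x * h x)) (uCube n) :=
        hf.integrable_sq.add ((SobolAux.int_mul hf hh).const_mul 2)
      rw [heq, integral_add hsum hh.integrable_sq,
        integral_add hf.integrable_sq ((SobolAux.int_mul hf hh).const_mul 2), integral_const_mul]
    have h2 : mval (uCube n) (f + h) = mval (uCube n) f + mval (uCube n) h := by
      unfold mval
      have heq : (fun x => (f + h) x) = fun x => f x + h x := by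
        funext x; simp
      calc ∫ x, (f + h) x ∂(uCube n) = ∫ x, (f x + h x) ∂(uCube n) := by rw [heq]
      _ = _ := integral_add (hf.integrable one_le_two) (hh.integrable one_le_two)
    have h3 : var' (uCube n) (f + h)
        = var' (uCube n) f + var' (uCube n) h + 2 * cov' (uCube n) f h := by
      unfold var' cov'
      rw [h1, h2]; ring
    linarith
  -- conclude
  have hsf : sobolT (uCube n) (updC i) f * var' (uCube n) f = tVar (uCube n) (updC i) f :=
    div_mul_cancel₀ _ hvf.ne'
  have hsh : sobolT (uCube n) (updC i) h * var' (uCube n) h = tVar (uCube n) (updC i) h :=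
    div_mul_cancel₀ _ hvh.ne'
  rw [hsf, hsh]
  show tVar (uCube n) (updC i) (f + h) / var' (uCube n) (f + h) ≤ _
  exact div_le_div₀ (by positivity) hkey (by linarith) hvar
end

section
/- Let G: ℝ² → ℝ satisfy |G(u,v) − G(u₀,v)| ≤ L|u − u₀| for all u,u₀,v and |G(u,v)| ≥ c√(u² + v²) for some L ≥ c > 0. Let g(x,ξ) = G(f(x), h(x_{∼i},ξ)) ∈ L²((0,1)^{n+m}) with mean zero, where f ∈ L²((0,1)ⁿ), h ∈ L²((0,1)^{n+m−1}) (h independent of x_i). Then S^g_{T,x_i} ≤ 2(L²/c²)·(Var(f)/(Var(f)+Var(h)))·S^f_{T,x_i}. -/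
open MeasureTheory

noncomputable section SobolAux
open MeasureTheory
set_option linter.unusedSectionVars false

instance SA_prob_eta : IsProbabilityMeasure (volume.restrict (Set.Ioo (0:ℝ) 1)) :=
  ⟨by simp⟩

instance SA_prob_uCube (n : ℕ) : IsProbabilityMeasure (uCube n) :=
  MeasureTheory.Measure.pi.instIsProbabilityMeasure _

lemma SA_meas_upd {n : ℕ} (i : Fin n) :
    Measurable (fun q : (Fin n → ℝ) × ℝ => Function.update q.1 i q.2) := by
  apply measurable_pi_lambda
  intro j
  simp only [Function.update_apply]
  by_cases hj : j = i
  · simpa [hj] using measurable_snd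
  · simp [hj]
    exact (measurable_pi_apply j).comp measurable_fst

lemma SA_mp_updC {n : ℕ} (i : Fin n) :
    MeasurePreserving (fun q : (Fin n → ℝ) × ℝ => Function.update q.1 i q.2)
      ((uCube n).prod (volume.restrict (Set.Ioo 0 1))) (uCube n) := by
  refine ⟨SA_meas_upd i, ?_⟩
  refine (Measure.pi_eq fun s hs => ?_).symm
  rw [Measure.map_apply (SA_meas_upd i) (MeasurableSet.univ_pi hs)]
  have hpre : (fun q : (Fin n → ℝ) × ℝ => Function.update q.1 i q.2) ⁻¹' Set.pi Set.univ s
      = (Set.pi Set.univ (Function.update s i Set.univ)) ×ˢ (s i) := by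
    ext ⟨x, t⟩
    simp only [Set.mem_preimage, Set.mem_pi, Set.mem_univ, forall_true_left, Set.mem_prod,
      Function.update_apply]
    constructor
    · intro hmem
      refine ⟨fun j => ?_, by simpa using hmem i⟩
      rcases eq_or_ne j i with rfl | hj
      · simp
      · simpa [hj] using hmem j
    · rintro ⟨h1, h2⟩ j
      rcases eq_or_ne j i with rfl | hj
      · simpa using h2
      · simpa [hj] using h1 j
  rw [hpre, Measure.prod_prod]
  show (Measure.pi fun _ => volume.restrict (Set.Ioo 0 1)) _ * _ = _
  rw [Measure.pi_pi]
  have hfun : ∀ j, (volume.restrict (Set.Ioo (0:ℝ) 1)) (Function.update s i Set.univ j)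
      = Function.update (fun j => (volume.restrict (Set.Ioo (0:ℝ) 1)) (s j)) i 1 j := by
    intro j
    rcases eq_or_ne j i with rfl | hj
    · simp
    · simp [Function.update_of_ne hj]
  rw [Finset.prod_congr rfl fun j _ => hfun j, Finset.prod_update_of_mem (Finset.mem_univ i),
    one_mul, mul_comm, Finset.sdiff_singleton_eq_erase]
  exact Finset.mul_prod_erase Finset.univ
    (fun j => (volume.restrict (Set.Ioo 0 1)) (s j)) (Finset.mem_univ i)

lemma SA_mp_fst {α β : Type*} [MeasurableSpace α] [MeasurableSpace β]
    (μ : Measure α) (ν : Measure β) [SFinite ν] [IsProbabilityMeasure ν] :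
    MeasurePreserving (Prod.fst : α × β → α) (μ.prod ν) μ :=
  ⟨measurable_fst, by simp [Measure.map_fst_prod]⟩

lemma SA_mp_updF {n m : ℕ} (i : Fin n) :
    MeasurePreserving (fun q : ((Fin n → ℝ) × (Fin m → ℝ)) × ℝ => updF i q.1 q.2)
      (((uCube n).prod (uCube m)).prod (volume.restrict (Set.Ioo 0 1)))
      ((uCube n).prod (uCube m)) := by
  have e1 := measurePreserving_prodAssoc (uCube n) (uCube m)
    (volume.restrict (Set.Ioo (0:ℝ) 1))
  have e2 := (MeasurePreserving.id (uCube n)).prod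
    (Measure.measurePreserving_swap (μ := uCube m) (ν := volume.restrict (Set.Ioo (0:ℝ) 1)))
  have e3 := MeasurePreserving.symm
    (MeasurableEquiv.prodAssoc (α := Fin n → ℝ) (β := ℝ) (γ := Fin m → ℝ))
    (measurePreserving_prodAssoc (uCube n) (volume.restrict (Set.Ioo (0:ℝ) 1)) (uCube m))
  have e4 := (SA_mp_updC i).prod (MeasurePreserving.id (uCube m))
  exact (e4.comp e3).comp (e2.comp e1)

lemma SA_integrable_comp {α β : Type*} [MeasurableSpace α] [MeasurableSpace β]
    {μ : Measure α} {ν : Measure β} {T : α → β} (hT : MeasurePreserving T μ ν)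
    {F : β → ℝ} (hF : Integrable F ν) : Integrable (fun q => F (T q)) μ := by
  rw [← hT.map_eq] at hF
  exact (integrable_map_measure hF.aestronglyMeasurable hT.measurable.aemeasurable).mp hF

lemma SA_integral_comp {α β : Type*} [MeasurableSpace α] [MeasurableSpace β]
    {μ : Measure α} {ν : Measure β} {T : α → β} (hT : MeasurePreserving T μ ν)
    {F : β → ℝ} (hF : AEStronglyMeasurable F ν) :
    ∫ q, F (T q) ∂μ = ∫ p, F p ∂ν := by
  rw [← hT.map_eq] at hF ⊢
  exact (integral_map hT.measurable.aemeasurable hF).symm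

lemma SA_memLp_comp {α β : Type*} [MeasurableSpace α] [MeasurableSpace β]
    {μ : Measure α} {ν : Measure β} {T : α → β} (hT : MeasurePreserving T μ ν)
    {F : β → ℝ} (hF : MemLp F 2 ν) : MemLp (fun q => F (T q)) 2 μ := by
  rw [← hT.map_eq] at hF
  exact (memLp_map_measure_iff hF.aestronglyMeasurable hT.measurable.aemeasurable).mp hF

lemma SA_sq_integral_le {α : Type*} [MeasurableSpace α] (ν : Measure α) [IsProbabilityMeasure ν]
    {φ : α → ℝ} (h1 : Integrable φ ν) (h2 : Integrable (fun t => φ t ^ 2) ν) :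
    (∫ t, φ t ∂ν) ^ 2 ≤ ∫ t, φ t ^ 2 ∂ν := by
  set c := ∫ t, φ t ∂ν with hc
  have h0 : (0:ℝ) ≤ ∫ t, (φ t - c) ^ 2 ∂ν := integral_nonneg fun t => sq_nonneg _
  have hrw : (fun t => (φ t - c) ^ 2) = fun t => (φ t ^ 2 - 2 * c * φ t) + c ^ 2 := by
    funext t; ring
  have hint1 : Integrable (fun t => φ t ^ 2 - 2 * c * φ t) ν := h2.sub (h1.const_mul (2 * c))
  rw [hrw, integral_add hint1 (integrable_const _),
    integral_sub h2 (h1.const_mul (2 * c)), integral_const_mul, integral_const] at h0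
  simp only [probReal_univ, measure_univ, ENNReal.toReal_one, smul_eq_mul, one_mul, ← hc] at h0
  nlinarith [h0]

lemma SA_fst_sq_integrable {α : Type*} [MeasurableSpace α] (ν : Measure α)
    [IsProbabilityMeasure ν] {φ : α → ℝ} (h2 : Integrable (fun t => φ t ^ 2) ν) :
    Integrable (fun z : α × α => (φ z.1) ^ 2) (ν.prod ν) := by
  simpa using h2.mul_prod (integrable_const (1:ℝ))

lemma SA_snd_sq_integrable {α : Type*} [MeasurableSpace α] (ν : Measure α)
    [IsProbabilityMeasure ν] {φ : α → ℝ} (h2 : Integrable (fun t => φ t ^ 2) ν) :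
    Integrable (fun z : α × α => (φ z.2) ^ 2) (ν.prod ν) := by
  simpa using (integrable_const (1:ℝ)).mul_prod h2

lemma SA_diff_sq_integrable {α : Type*} [MeasurableSpace α] (ν : Measure α)
    [IsProbabilityMeasure ν] {φ : α → ℝ} (h1 : Integrable φ ν)
    (h2 : Integrable (fun t => φ t ^ 2) ν) :
    Integrable (fun z : α × α => (φ z.1 - φ z.2) ^ 2) (ν.prod ν) := by
  have hrw : (fun z : α × α => (φ z.1 - φ z.2) ^ 2)
      = fun z : α × α => ((φ z.1) ^ 2 + (φ z.2) ^ 2) - 2 * (φ z.1 * φ z.2) := by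
    funext z; ring
  rw [hrw]
  exact ((SA_fst_sq_integrable ν h2).add (SA_snd_sq_integrable ν h2)).sub
    ((h1.mul_prod h1).const_mul 2)

lemma SA_double {α : Type*} [MeasurableSpace α] (ν : Measure α) [IsProbabilityMeasure ν]
    {φ : α → ℝ} (h1 : Integrable φ ν) (h2 : Integrable (fun t => φ t ^ 2) ν) :
    ∫ z, (φ z.1 - φ z.2) ^ 2 ∂(ν.prod ν)
      = 2 * ((∫ t, φ t ^ 2 ∂ν) - (∫ t, φ t ∂ν) ^ 2) := by
  have hrw : (fun z : α × α => (φ z.1 - φ z.2) ^ 2)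
      = fun z : α × α => ((φ z.1) ^ 2 + (φ z.2) ^ 2) - 2 * (φ z.1 * φ z.2) := by
    funext z; ring
  have hint1 : Integrable (fun z : α × α => (φ z.1) ^ 2 + (φ z.2) ^ 2) (ν.prod ν) :=
    (SA_fst_sq_integrable ν h2).add (SA_snd_sq_integrable ν h2)
  rw [hrw, integral_sub hint1 ((h1.mul_prod h1).const_mul 2),
    integral_add (SA_fst_sq_integrable ν h2) (SA_snd_sq_integrable ν h2), integral_const_mul]
  have e1 : ∫ z : α × α, (φ z.1) ^ 2 ∂(ν.prod ν) = ∫ t, φ t ^ 2 ∂ν := by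
    simpa using integral_prod_mul (μ := ν) (ν := ν) (fun t => φ t ^ 2) (fun _ => (1:ℝ))
  have e2 : ∫ z : α × α, (φ z.2) ^ 2 ∂(ν.prod ν) = ∫ t, φ t ^ 2 ∂ν := by
    simpa using integral_prod_mul (μ := ν) (ν := ν) (fun _ => (1:ℝ)) (fun t => φ t ^ 2)
  have e3 : ∫ z : α × α, φ z.1 * φ z.2 ∂(ν.prod ν) = (∫ t, φ t ∂ν) * ∫ t, φ t ∂ν :=
    integral_prod_mul (μ := ν) (ν := ν) φ φ
  rw [e1, e2, e3]; ring

lemma SA_slice {α : Type*} [MeasurableSpace α] (ν : Measure α) [IsProbabilityMeasure ν]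
    {φ ψ : α → ℝ} {L : ℝ} (hL : 0 ≤ L)
    (hφ1 : Integrable φ ν) (hφ2 : Integrable (fun t => φ t ^ 2) ν)
    (hψ1 : Integrable ψ ν) (hψ2 : Integrable (fun t => ψ t ^ 2) ν)
    (hLip : ∀ t s, |φ t - φ s| ≤ L * |ψ t - ψ s|) :
    (∫ t, φ t ^ 2 ∂ν) - (∫ t, φ t ∂ν) ^ 2
      ≤ 2 * L ^ 2 * ((∫ t, ψ t ^ 2 ∂ν) - (∫ t, ψ t ∂ν) ^ 2) := by
  have hdφ := SA_double ν hφ1 hφ2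
  have hdψ := SA_double ν hψ1 hψ2
  have hψnn : (0:ℝ) ≤ (∫ t, ψ t ^ 2 ∂ν) - (∫ t, ψ t ∂ν) ^ 2 :=
    sub_nonneg.mpr (SA_sq_integral_le ν hψ1 hψ2)
  have hmono : ∫ z, (φ z.1 - φ z.2) ^ 2 ∂(ν.prod ν)
      ≤ ∫ z, L ^ 2 * (ψ z.1 - ψ z.2) ^ 2 ∂(ν.prod ν) := by
    refine integral_mono_of_nonneg (Filter.Eventually.of_forall fun z => sq_nonneg _)
      ((SA_diff_sq_integrable ν hψ1 hψ2).const_mul _)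
      (Filter.Eventually.of_forall fun z => ?_)
    calc (φ z.1 - φ z.2) ^ 2 = |φ z.1 - φ z.2| ^ 2 := (sq_abs _).symm
      _ ≤ (L * |ψ z.1 - ψ z.2|) ^ 2 := pow_le_pow_left₀ (abs_nonneg _) (hLip z.1 z.2) 2
      _ = L ^ 2 * (ψ z.1 - ψ z.2) ^ 2 := by rw [mul_pow, sq_abs]
  rw [integral_const_mul, hdφ, hdψ] at hmono
  nlinarith [sq_nonneg L]

section Pieces
variable {α : Type*} [MeasurableSpace α] (μ : Measure α) [IsProbabilityMeasure μ]
  (upd : α → ℝ → α)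
  (hupd : MeasurePreserving (fun q : α × ℝ => upd q.1 q.2)
    (μ.prod (volume.restrict (Set.Ioo 0 1))) μ)
  {f : α → ℝ} (hf : MemLp f 2 μ)

local notation "ηv" => (volume.restrict (Set.Ioo (0:ℝ) 1))

include hupd hf

omit [IsProbabilityMeasure μ] hupd hf in
lemma SA_cMean_eq (x : α) : cMean upd f x = ∫ t, f (upd x t) ∂ηv := rfl

lemma SA_int_sq_slice : Integrable (fun x => ∫ t, (f (upd x t)) ^ 2 ∂ηv) μ := by
  have h := SA_integrable_comp hupd hf.integrable_sq
  exact h.integral_prod_left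

lemma SA_ae_slices : ∀ᵐ x ∂μ, Integrable (fun t => f (upd x t)) ηv ∧
    Integrable (fun t => (f (upd x t)) ^ 2) ηv := by
  have h1 := (SA_integrable_comp hupd (hf.integrable one_le_two)).prod_right_ae
  have h2 := (SA_integrable_comp hupd hf.integrable_sq).prod_right_ae
  filter_upwards [h1, h2] with x hx1 hx2
  exact ⟨hx1, hx2⟩

lemma SA_cMean_asm : AEStronglyMeasurable (cMean upd f) μ := by
  have h := (SA_integrable_comp hupd (hf.integrable one_le_two)).aestronglyMeasurable
  exact h.integral_prod_right'

lemma SA_cMean_sq_int : Integrable (fun x => (cMean upd f x) ^ 2) μ := by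
  have hasm : AEStronglyMeasurable (fun x => (cMean upd f x) ^ 2) μ := by
    have h := SA_cMean_asm μ upd hupd hf
    exact h.pow 2
  refine Integrable.mono' (SA_int_sq_slice μ upd hupd hf) hasm ?_
  filter_upwards [SA_ae_slices μ upd hupd hf] with x hx
  rw [Real.norm_eq_abs, abs_of_nonneg (sq_nonneg _), SA_cMean_eq]
  exact SA_sq_integral_le (volume.restrict (Set.Ioo (0:ℝ) 1)) hx.1 hx.2

lemma SA_intSq_eq : intSq μ f = ∫ x, ∫ t, (f (upd x t)) ^ 2 ∂ηv ∂μ := by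
  have h1 : intSq μ f = ∫ q : α × ℝ, (f (upd q.1 q.2)) ^ 2 ∂(μ.prod ηv) :=
    (SA_integral_comp hupd hf.integrable_sq.aestronglyMeasurable).symm
  rw [h1, integral_prod _ (SA_integrable_comp hupd hf.integrable_sq)]

lemma SA_tVar_repr : tVar μ upd f
    = ∫ x, ((∫ t, (f (upd x t)) ^ 2 ∂ηv) - (cMean upd f x) ^ 2) ∂μ := by
  rw [tVar, SA_intSq_eq μ upd hupd hf,
    integral_sub (SA_int_sq_slice μ upd hupd hf) (SA_cMean_sq_int μ upd hupd hf)]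

lemma SA_tVar_nonneg : 0 ≤ tVar μ upd f := by
  rw [SA_tVar_repr μ upd hupd hf]
  refine integral_nonneg_of_ae ?_
  filter_upwards [SA_ae_slices μ upd hupd hf] with x hx
  simp only [Pi.zero_apply, sub_nonneg, SA_cMean_eq]
  exact SA_sq_integral_le (volume.restrict (Set.Ioo (0:ℝ) 1)) hx.1 hx.2

end Pieces

lemma SA_key {α : Type*} [MeasurableSpace α] (μ : Measure α) [IsProbabilityMeasure μ]
    (upd : α → ℝ → α)
    (hupd : MeasurePreserving (fun q : α × ℝ => upd q.1 q.2)
      (μ.prod (volume.restrict (Set.Ioo 0 1))) μ)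
    {g f : α → ℝ} (hg : MemLp g 2 μ) (hf : MemLp f 2 μ)
    {L : ℝ} (hL : 0 ≤ L)
    (hLip : ∀ x t s, |g (upd x t) - g (upd x s)| ≤ L * |f (upd x t) - f (upd x s)|) :
    tVar μ upd g ≤ 2 * L ^ 2 * tVar μ upd f := by
  rw [SA_tVar_repr μ upd hupd hg, SA_tVar_repr μ upd hupd hf, ← integral_const_mul]
  refine integral_mono_ae
    ((SA_int_sq_slice μ upd hupd hg).sub (SA_cMean_sq_int μ upd hupd hg))
    (((SA_int_sq_slice μ upd hupd hf).sub (SA_cMean_sq_int μ upd hupd hf)).const_mul _) ?_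
  filter_upwards [SA_ae_slices μ upd hupd hg, SA_ae_slices μ upd hupd hf] with x hxg hxf
  rw [SA_cMean_eq, SA_cMean_eq]
  exact SA_slice (volume.restrict (Set.Ioo (0:ℝ) 1)) hL hxg.1 hxg.2 hxf.1 hxf.2 (hLip x)

end SobolAux

/-- General estimate (Theorem D1): if `G` is `L`-Lipschitz in its first argument
uniformly in the second and `c`-coercive, `g = G(f(x), h(x_{∼i},ξ))` has mean zero,
then `S^g_{T,x_i} ≤ 2(L²/c²)·(Var f/(Var f + Var h))·S^f_{T,x_i}`. -/
theorem stmt11 {n m : ℕ} (i : Fin n) (G : ℝ → ℝ → ℝ) (L c : ℝ)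
    (hc : 0 < c) (hLc : c ≤ L)
    (hLip : ∀ u u₀ v : ℝ, |G u v - G u₀ v| ≤ L * |u - u₀|)
    (hcoer : ∀ u v : ℝ, c * Real.sqrt (u ^ 2 + v ^ 2) ≤ |G u v|)
    (f : (Fin n → ℝ) → ℝ) (h : (Fin n → ℝ) × (Fin m → ℝ) → ℝ)
    (hf : MemLp f 2 (uCube n)) (hh : MemLp h 2 ((uCube n).prod (uCube m)))
    (hind : ∀ (x : Fin n → ℝ) (t : ℝ) (ξ : Fin m → ℝ),
      h (Function.update x i t, ξ) = h (x, ξ))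
    (hg : MemLp (fun p : (Fin n → ℝ) × (Fin m → ℝ) => G (f p.1) (h p)) 2
      ((uCube n).prod (uCube m)))
    (hmean : mval ((uCube n).prod (uCube m)) (fun p => G (f p.1) (h p)) = 0)
    (hvf : 0 < var' (uCube n) f)
    (hvg : 0 < var' ((uCube n).prod (uCube m)) fun p => G (f p.1) (h p)) :
    sobolT ((uCube n).prod (uCube m)) (updF i) (fun p => G (f p.1) (h p)) ≤
      2 * (L ^ 2 / c ^ 2) *
        (var' (uCube n) f /
          (var' (uCube n) f + var' ((uCube n).prod (uCube m)) h)) *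
        sobolT (uCube n) (updC i) f := by
  have hmpF := SA_mp_updF (m := m) i
  have hmpC : MeasurePreserving (fun q : (Fin n → ℝ) × ℝ => updC i q.1 q.2)
      ((uCube n).prod (volume.restrict (Set.Ioo 0 1))) (uCube n) := SA_mp_updC i
  have hmpfst := SA_mp_fst (uCube n) (uCube m)
  have hL0 : (0:ℝ) ≤ L := le_trans hc.le hLc
  -- MemLp of f ∘ fst
  have hfP : MemLp (fun p : (Fin n → ℝ) × (Fin m → ℝ) => f p.1) 2
      ((uCube n).prod (uCube m)) := SA_memLp_comp hmpfst hf
  -- key inequality for total variances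
  have hkey : tVar ((uCube n).prod (uCube m)) (updF i) (fun p => G (f p.1) (h p))
      ≤ 2 * L ^ 2 * tVar ((uCube n).prod (uCube m)) (updF i) (fun p => f p.1) := by
    refine SA_key _ (updF i) hmpF hg hfP hL0 ?_
    intro p t s
    show |G (f (Function.update p.1 i t)) (h (Function.update p.1 i t, p.2))
        - G (f (Function.update p.1 i s)) (h (Function.update p.1 i s, p.2))|
        ≤ L * |f (Function.update p.1 i t) - f (Function.update p.1 i s)|
    rw [hind p.1 t p.2, hind p.1 s p.2]
    exact hLip _ _ _
  -- transfer the total variance of f ∘ fst to the cube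
  have hcm : ∀ p : (Fin n → ℝ) × (Fin m → ℝ),
      cMean (updF i) (fun p : (Fin n → ℝ) × (Fin m → ℝ) => f p.1) p
        = cMean (updC i) f p.1 := fun p => rfl
  have hcmAsm : AEStronglyMeasurable (fun x => (cMean (updC i) f x) ^ 2) (uCube n) := by
    have h1 := SA_cMean_asm (uCube n) (updC i) hmpC hf
    exact h1.pow 2
  have htVarF : tVar ((uCube n).prod (uCube m)) (updF i) (fun p => f p.1)
      = tVar (uCube n) (updC i) f := by
    unfold tVar intSq
    have e1 : ∫ p : (Fin n → ℝ) × (Fin m → ℝ), (f p.1) ^ 2 ∂((uCube n).prod (uCube m))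
        = ∫ x, (f x) ^ 2 ∂(uCube n) :=
      SA_integral_comp hmpfst hf.integrable_sq.aestronglyMeasurable
    have e2 : ∫ p : (Fin n → ℝ) × (Fin m → ℝ), (cMean (updC i) f p.1) ^ 2
          ∂((uCube n).prod (uCube m))
        = ∫ x, (cMean (updC i) f x) ^ 2 ∂(uCube n) :=
      SA_integral_comp hmpfst hcmAsm
    simp only [hcm]
    rw [e1, e2]
  have hTf0 : 0 ≤ tVar (uCube n) (updC i) f := SA_tVar_nonneg (uCube n) (updC i) hmpC hf
  -- variance bounds
  have hVh : 0 ≤ var' ((uCube n).prod (uCube m)) h := by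
    have := SA_sq_integral_le ((uCube n).prod (uCube m))
      (hh.integrable one_le_two) hh.integrable_sq
    unfold var' intSq mval
    linarith
  -- coercivity bound on the variance of g
  have hIg : c ^ 2 * (intSq (uCube n) f + intSq ((uCube n).prod (uCube m)) h)
      ≤ intSq ((uCube n).prod (uCube m)) (fun p => G (f p.1) (h p)) := by
    have hpoint : ∀ p : (Fin n → ℝ) × (Fin m → ℝ),
        c ^ 2 * ((f p.1) ^ 2 + (h p) ^ 2) ≤ (G (f p.1) (h p)) ^ 2 := by
      intro p
      have h1 := hcoer (f p.1) (h p)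
      have h2 : (c * Real.sqrt ((f p.1) ^ 2 + (h p) ^ 2)) ^ 2 ≤ |G (f p.1) (h p)| ^ 2 :=
        pow_le_pow_left₀ (mul_nonneg hc.le (Real.sqrt_nonneg _)) h1 2
      rw [mul_pow, Real.sq_sqrt (by positivity), sq_abs] at h2
      exact h2
    have hfsq : Integrable (fun p : (Fin n → ℝ) × (Fin m → ℝ) => (f p.1) ^ 2)
        ((uCube n).prod (uCube m)) := SA_integrable_comp hmpfst hf.integrable_sq
    have hintl : Integrable (fun p : (Fin n → ℝ) × (Fin m → ℝ) =>
        c ^ 2 * ((f p.1) ^ 2 + (h p) ^ 2)) ((uCube n).prod (uCube m)) :=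
      (hfsq.add hh.integrable_sq).const_mul _
    have hmono := integral_mono hintl hg.integrable_sq hpoint
    rw [integral_const_mul, integral_add hfsq hh.integrable_sq] at hmono
    have e1 : ∫ p : (Fin n → ℝ) × (Fin m → ℝ), (f p.1) ^ 2 ∂((uCube n).prod (uCube m))
        = intSq (uCube n) f := SA_integral_comp hmpfst hf.integrable_sq.aestronglyMeasurable
    rw [e1] at hmono
    exact hmono
  have hVg : var' ((uCube n).prod (uCube m)) (fun p => G (f p.1) (h p))
      = intSq ((uCube n).prod (uCube m)) (fun p => G (f p.1) (h p)) := by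
    unfold var'
    rw [hmean]
    ring
  have hVfN : var' (uCube n) f ≤ intSq (uCube n) f := by
    unfold var'
    nlinarith [sq_nonneg (mval (uCube n) f)]
  have hVhN : var' ((uCube n).prod (uCube m)) h ≤ intSq ((uCube n).prod (uCube m)) h := by
    unfold var'
    nlinarith [sq_nonneg (mval ((uCube n).prod (uCube m)) h)]
  have hD : 0 < c ^ 2 * (var' (uCube n) f + var' ((uCube n).prod (uCube m)) h) := by
    have : 0 < var' (uCube n) f + var' ((uCube n).prod (uCube m)) h := by linarith
    positivity
  have hDleVg : c ^ 2 * (var' (uCube n) f + var' ((uCube n).prod (uCube m)) h)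
      ≤ var' ((uCube n).prod (uCube m)) (fun p => G (f p.1) (h p)) := by
    rw [hVg]
    nlinarith [sq_nonneg c]
  -- assemble
  have hdiv : tVar ((uCube n).prod (uCube m)) (updF i) (fun p => G (f p.1) (h p))
        / var' ((uCube n).prod (uCube m)) (fun p => G (f p.1) (h p))
      ≤ (2 * L ^ 2 * tVar (uCube n) (updC i) f)
        / (c ^ 2 * (var' (uCube n) f + var' ((uCube n).prod (uCube m)) h)) := by
    refine div_le_div₀ (by positivity) ?_ hD hDleVg
    rw [← htVarF]
    exact hkey
  have heq : (2 * L ^ 2 * tVar (uCube n) (updC i) f)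
        / (c ^ 2 * (var' (uCube n) f + var' ((uCube n).prod (uCube m)) h))
      = 2 * (L ^ 2 / c ^ 2) *
        (var' (uCube n) f / (var' (uCube n) f + var' ((uCube n).prod (uCube m)) h)) *
        (tVar (uCube n) (updC i) f / var' (uCube n) f) := by
    have hc0 : c ≠ 0 := ne_of_gt hc
    have hvf0 : var' (uCube n) f ≠ 0 := ne_of_gt hvf
    have hsum0 : var' (uCube n) f + var' ((uCube n).prod (uCube m)) h ≠ 0 := by
      intro h0
      nlinarith
    field_simp
  unfold sobolT
  rw [heq] at hdiv
  exact hdiv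
end
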